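/- arXiv:1104.1511 — 6 statements merged into one kernel-verified Lean document; each statement's English description precedes it below -/
import Mathlib

section
/- Let σ > 0, let η(z) = (2z/√(1−z²))·[((1+z)/2)^σ − ((1−z)/2)^σ]^{−1} for z ∈ (0,1), and let g(z) = (σz² − σz + 1)(1+z)^σ. Then η′(z) = 2^{σ+1}·(g(z) − g(−z)) / ((1−z²)^{3/2}·[(1+z)^σ − (1−z)^σ]²) for all z ∈ (0,1). -/
/-- formula for `η′(z)` on `(0,1)`. -/
theorem stmt_2 (σ : ℝ) (hσ : 0 < σ) (η g : ℝ → ℝ)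
    (hη : ∀ z : ℝ, η z = 2 * z / Real.sqrt (1 - z ^ 2) *
      (((1 + z) / 2) ^ σ - ((1 - z) / 2) ^ σ)⁻¹)
    (hg : ∀ z : ℝ, g z = (σ * z ^ 2 - σ * z + 1) * (1 + z) ^ σ) :
    ∀ z ∈ Set.Ioo (0 : ℝ) 1,
      deriv η z = (2 : ℝ) ^ (σ + 1) * (g z - g (-z)) /
        ((1 - z ^ 2) ^ ((3 : ℝ) / 2) * ((1 + z) ^ σ - (1 - z) ^ σ) ^ 2) := by
  intro z hz
  obtain ⟨hz0, hz1⟩ := hz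
  have ha : (0:ℝ) < 1 + z := by linarith
  have hb : (0:ℝ) < 1 - z := by linarith
  have hs : (0:ℝ) < 1 - z^2 := by nlinarith
  have hSpos : 0 < Real.sqrt (1 - z^2) := Real.sqrt_pos.mpr hs
  have hS2 : Real.sqrt (1 - z^2) ^ 2 = 1 - z^2 := Real.sq_sqrt hs.le
  have hABlt : ((1 - z)/2 : ℝ) ^ σ < ((1 + z)/2) ^ σ :=
    Real.rpow_lt_rpow (by linarith) (by linarith) hσ
  have hh : (((1+z)/2 : ℝ) ^ σ - ((1-z)/2) ^ σ) ≠ 0 := sub_ne_zero.mpr hABlt.ne'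
  have d1 : HasDerivAt (fun z : ℝ => 1 - z^2) (-(2*z)) z := by
    simpa using ((hasDerivAt_pow 2 z).const_sub 1)
  have dS : HasDerivAt (fun z : ℝ => Real.sqrt (1 - z^2))
      (1 / (2 * Real.sqrt (1 - z^2)) * (-(2*z))) z :=
    (Real.hasDerivAt_sqrt hs.ne').comp z d1
  have dnum : HasDerivAt (fun z : ℝ => 2*z) 2 z := by
    simpa using (hasDerivAt_id z).const_mul 2
  have df : HasDerivAt (fun z : ℝ => 2 * z / Real.sqrt (1 - z^2))
      ((2 * Real.sqrt (1 - z^2) - 2 * z * (1 / (2 * Real.sqrt (1 - z^2)) * (-(2*z))))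
        / Real.sqrt (1 - z^2) ^ 2) z := dnum.div dS hSpos.ne'
  have dA : HasDerivAt (fun z : ℝ => ((1+z)/2) ^ σ)
      (σ * ((1+z)/2) ^ (σ-1) * (1/2)) z := by
    have inner : HasDerivAt (fun z : ℝ => (1+z)/2) (1/2) z := by
      simpa using ((hasDerivAt_id z).const_add 1).div_const 2
    exact (Real.hasDerivAt_rpow_const (Or.inl (by positivity))).comp z inner
  have dB : HasDerivAt (fun z : ℝ => ((1-z)/2) ^ σ)
      (σ * ((1-z)/2) ^ (σ-1) * (-1/2)) z := by
    have inner : HasDerivAt (fun z : ℝ => (1-z)/2) (-1/2) z := by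
      have := ((hasDerivAt_id z).const_sub 1).div_const 2
      simpa using this
    exact (Real.hasDerivAt_rpow_const (Or.inl (by positivity))).comp z inner
  have dh : HasDerivAt (fun z : ℝ => ((1+z)/2) ^ σ - ((1-z)/2) ^ σ)
      (σ * ((1+z)/2) ^ (σ-1) * (1/2) - σ * ((1-z)/2) ^ (σ-1) * (-1/2)) z := dA.sub dB
  have dη : HasDerivAt η
      ((2 * Real.sqrt (1 - z^2) - 2 * z * (1 / (2 * Real.sqrt (1 - z^2)) * (-(2*z))))
        / Real.sqrt (1 - z^2) ^ 2 * ((((1+z)/2) ^ σ - ((1-z)/2) ^ σ))⁻¹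
       + 2 * z / Real.sqrt (1 - z^2) *
         (-(σ * ((1+z)/2) ^ (σ-1) * (1/2) - σ * ((1-z)/2) ^ (σ-1) * (-1/2))
           / (((1+z)/2) ^ σ - ((1-z)/2) ^ σ) ^ 2)) z := by
    have : η = fun z : ℝ => 2 * z / Real.sqrt (1 - z ^ 2) *
        (((1 + z) / 2) ^ σ - ((1 - z) / 2) ^ σ)⁻¹ := funext hη
    rw [this]
    exact df.mul (dh.inv hh)
  rw [dη.deriv, hg, hg]
  have hA : (0:ℝ) < (1+z)^σ := Real.rpow_pos_of_pos ha σ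
  have hB : (0:ℝ) < (1-z)^σ := Real.rpow_pos_of_pos hb σ
  have hP : (0:ℝ) < (2:ℝ)^σ := Real.rpow_pos_of_pos two_pos σ
  have hBA : ((1-z):ℝ)^σ < (1+z)^σ := Real.rpow_lt_rpow hb.le (by linarith) hσ
  have e1 : ((1+z)/2 : ℝ)^σ = (1+z)^σ / 2^σ := Real.div_rpow ha.le (by norm_num) σ
  have e2 : ((1-z)/2 : ℝ)^σ = (1-z)^σ / 2^σ := Real.div_rpow hb.le (by norm_num) σ
  have e1' : ((1+z)/2 : ℝ)^(σ-1) = ((1+z)^σ/(1+z)) / (2^σ/2) := by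
    rw [Real.div_rpow ha.le (by norm_num), Real.rpow_sub_one ha.ne',
      Real.rpow_sub_one two_ne_zero]
  have e2' : ((1-z)/2 : ℝ)^(σ-1) = ((1-z)^σ/(1-z)) / (2^σ/2) := by
    rw [Real.div_rpow hb.le (by norm_num), Real.rpow_sub_one hb.ne',
      Real.rpow_sub_one two_ne_zero]
  have e3 : ((2:ℝ))^(σ+1) = 2^σ * 2 := Real.rpow_add_one two_ne_zero σ
  have e4 : (1 - z^2 : ℝ)^((3:ℝ)/2) = (1 - z^2) * Real.sqrt (1-z^2) := by
    rw [show (3:ℝ)/2 = 1 + 1/2 by norm_num, Real.rpow_add hs, Real.rpow_one,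
      ← Real.sqrt_eq_rpow]
  have hneg1 : (1 + -z : ℝ) = 1 - z := by ring
  rw [hneg1, e1, e2, e1', e2', e3, e4]
  set S := Real.sqrt (1 - z^2) with hS
  set A := ((1+z):ℝ)^σ with hAdef
  set B := ((1-z):ℝ)^σ with hBdef
  set P := ((2:ℝ))^σ with hPdef
  have hABne : A - B ≠ 0 := sub_ne_zero.mpr hBA.ne'
  have hz2 : 1 - z^2 = (1+z)*(1-z) := by ring
  field_simp
  ring_nf
  have h4 : S^4 = (1-z^2)^2 := by rw [← hS2]; ring
  rw [hS2]
  ring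
end

section
/- Let σ_threshold = (3 + √13)/2, let g(z) = (σz² − σz + 1)(1+z)^σ with σ = σ_threshold, and h(z) = g(z) − g(−z). Then h‴(0) = 0, h⁗(0) = 0, and the fifth derivative h⁽⁵⁾(0) = 24(3+√13)(4+√13) > 0. -/
lemma hasD_plus (a b c p : ℝ) {z : ℝ} (hz : 0 < 1 + z) :
    HasDerivAt (fun w : ℝ => (a*w^2 + b*w + c) * (1+w)^p)
      (((p+2)*a*z^2 + (2*a+(p+1)*b)*z + (b+p*c)) * (1+z)^(p-1)) z := by
  have h1 : HasDerivAt (fun w : ℝ => (1+w)^p) (p * (1+z)^(p-1) * 1) z :=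
    (Real.hasDerivAt_rpow_const (p := p) (Or.inl (ne_of_gt hz))).comp z
      ((hasDerivAt_id z).const_add 1)
  have h2 : HasDerivAt (fun w : ℝ => a*w^2 + b*w + c) (2*a*z + b) z := by
    have h3 := ((hasDerivAt_pow 2 z).const_mul a).add ((hasDerivAt_id z).const_mul b)
    simpa [mul_comm, mul_assoc, mul_left_comm] using h3.add_const c
  have h5 := h2.mul h1
  have hb : (1+z)^p = (1+z)^(p-1) * (1+z) := by
    rw [← Real.rpow_add_one (ne_of_gt hz)]; norm_num
  exact h5.congr_deriv (by rw [hb]; ring)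

lemma hasD_minus (a b c p : ℝ) {z : ℝ} (hz : 0 < 1 - z) :
    HasDerivAt (fun w : ℝ => (a*w^2 - b*w + c) * (1-w)^p)
      (-(((p+2)*a*z^2 - (2*a+(p+1)*b)*z + (b+p*c)) * (1-z)^(p-1))) z := by
  have h0 : 0 < 1 + (-z) := by linarith
  have h1 := (hasD_plus a b c p h0).comp z (hasDerivAt_neg z)
  have hfun : ((fun w : ℝ => (a*w^2 + b*w + c) * (1+w)^p) ∘ (fun w : ℝ => -w))
      = (fun w : ℝ => (a*w^2 - b*w + c) * (1-w)^p) := by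
    funext w
    show (a*(-w)^2 + b*(-w) + c) * (1 + -w)^p = (a*w^2 - b*w + c) * (1-w)^p
    rw [show (1:ℝ) + -w = 1 - w by ring]
    congr 1; ring
  rw [hfun] at h1
  exact h1.congr_deriv (by rw [show (1:ℝ) + -z = 1 - z by ring]; ring)

lemma deriv_step (a b c p s : ℝ) (f : ℝ → ℝ) {z : ℝ} (hz : z ∈ Set.Ioo (-1:ℝ) 1)
    (hf : ∀ w ∈ Set.Ioo (-1:ℝ) 1, f w =
      (a*w^2 + b*w + c) * (1+w)^p + s * ((a*w^2 - b*w + c) * (1-w)^p)) :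
    deriv f z = ((p+2)*a*z^2 + (2*a+(p+1)*b)*z + (b+p*c)) * (1+z)^(p-1)
      + (-s) * ((((p+2)*a*z^2 - (2*a+(p+1)*b)*z + (b+p*c))) * (1-z)^(p-1)) := by
  have hz1 : 0 < 1 + z := by have := hz.1; linarith
  have hz2 : 0 < 1 - z := by have := hz.2; linarith
  have hF : HasDerivAt
      (fun w : ℝ => (a*w^2 + b*w + c) * (1+w)^p + s * ((a*w^2 - b*w + c) * (1-w)^p))
      (((p+2)*a*z^2 + (2*a+(p+1)*b)*z + (b+p*c)) * (1+z)^(p-1)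
        + (-s) * ((((p+2)*a*z^2 - (2*a+(p+1)*b)*z + (b+p*c))) * (1-z)^(p-1))) z := by
    have := (hasD_plus a b c p hz1).add ((hasD_minus a b c p hz2).const_mul s)
    exact this.congr_deriv (by ring)
  have heq : f =ᶠ[nhds z]
      (fun w : ℝ => (a*w^2 + b*w + c) * (1+w)^p + s * ((a*w^2 - b*w + c) * (1-w)^p)) :=
    Filter.eventuallyEq_of_mem (isOpen_Ioo.mem_nhds hz) hf
  rw [heq.deriv_eq]
  exact hF.deriv

/-- at `σ = σ_threshold = (3+√13)/2`, `h‴(0) = h⁗(0) = 0` and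
`h⁽⁵⁾(0) = 24(3+√13)(4+√13) > 0`. -/
theorem stmt_4 (σ : ℝ) (hσ : σ = (3 + Real.sqrt 13) / 2) (g h : ℝ → ℝ)
    (hg : ∀ z : ℝ, g z = (σ * z ^ 2 - σ * z + 1) * (1 + z) ^ σ)
    (hh : ∀ z : ℝ, h z = g z - g (-z)) :
    iteratedDeriv 3 h 0 = 0 ∧ iteratedDeriv 4 h 0 = 0 ∧
      iteratedDeriv 5 h 0 = 24 * (3 + Real.sqrt 13) * (4 + Real.sqrt 13) ∧
      0 < 24 * (3 + Real.sqrt 13) * (4 + Real.sqrt 13) := by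
  have e0 : ∀ w ∈ Set.Ioo (-1:ℝ) 1, h w = (σ*w^2 + (-σ)*w + 1) * (1+w)^σ + (-1) * ((σ*w^2 - (-σ)*w + 1) * (1-w)^σ) := by
    intro w _
    rw [hh, hg, hg]
    rw [show (1:ℝ) + -w = 1 - w by ring]
    ring
  have e1 : ∀ w ∈ Set.Ioo (-1:ℝ) 1, iteratedDeriv 1 h w = (((σ+2)*σ)*w^2 + (2*σ+(σ+1)*(-σ))*w + ((-σ)+σ*1)) * (1+w)^(σ-1) + (-(-1)) * ((((σ+2)*σ)*w^2 - (2*σ+(σ+1)*(-σ))*w + ((-σ)+σ*1)) * (1-w)^(σ-1)) := by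
    intro w hw
    rw [show iteratedDeriv 1 h = deriv (iteratedDeriv 0 h) from iteratedDeriv_succ]
    exact deriv_step σ (-σ) 1 σ (-1) (iteratedDeriv 0 h) hw (fun w hw => by rw [iteratedDeriv_zero]; exact e0 w hw)
  have e2 : ∀ w ∈ Set.Ioo (-1:ℝ) 1, iteratedDeriv 2 h w = ((((σ-1)+2)*((σ+2)*σ))*w^2 + (2*((σ+2)*σ)+((σ-1)+1)*(2*σ+(σ+1)*(-σ)))*w + ((2*σ+(σ+1)*(-σ))+(σ-1)*((-σ)+σ*1))) * (1+w)^((σ-1)-1) + (-(-(-1))) * (((((σ-1)+2)*((σ+2)*σ))*w^2 - (2*((σ+2)*σ)+((σ-1)+1)*(2*σ+(σ+1)*(-σ)))*w + ((2*σ+(σ+1)*(-σ))+(σ-1)*((-σ)+σ*1))) * (1-w)^((σ-1)-1)) := by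
    intro w hw
    rw [show iteratedDeriv 2 h = deriv (iteratedDeriv 1 h) from iteratedDeriv_succ]
    exact deriv_step ((σ+2)*σ) (2*σ+(σ+1)*(-σ)) ((-σ)+σ*1) (σ-1) (-(-1)) (iteratedDeriv 1 h) hw e1
  have e3 : ∀ w ∈ Set.Ioo (-1:ℝ) 1, iteratedDeriv 3 h w = (((((σ-1)-1)+2)*(((σ-1)+2)*((σ+2)*σ)))*w^2 + (2*(((σ-1)+2)*((σ+2)*σ))+(((σ-1)-1)+1)*(2*((σ+2)*σ)+((σ-1)+1)*(2*σ+(σ+1)*(-σ))))*w + ((2*((σ+2)*σ)+((σ-1)+1)*(2*σ+(σ+1)*(-σ)))+((σ-1)-1)*((2*σ+(σ+1)*(-σ))+(σ-1)*((-σ)+σ*1)))) * (1+w)^(((σ-1)-1)-1) + (-(-(-(-1)))) * ((((((σ-1)-1)+2)*(((σ-1)+2)*((σ+2)*σ)))*w^2 - (2*(((σ-1)+2)*((σ+2)*σ))+(((σ-1)-1)+1)*(2*((σ+2)*σ)+((σ-1)+1)*(2*σ+(σ+1)*(-σ))))*w + ((2*((σ+2)*σ)+((σ-1)+1)*(2*σ+(σ+1)*(-σ)))+((σ-1)-1)*((2*σ+(σ+1)*(-σ))+(σ-1)*((-σ)+σ*1))))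 * (1-w)^(((σ-1)-1)-1)) := by
    intro w hw
    rw [show iteratedDeriv 3 h = deriv (iteratedDeriv 2 h) from iteratedDeriv_succ]
    exact deriv_step (((σ-1)+2)*((σ+2)*σ)) (2*((σ+2)*σ)+((σ-1)+1)*(2*σ+(σ+1)*(-σ))) ((2*σ+(σ+1)*(-σ))+(σ-1)*((-σ)+σ*1)) ((σ-1)-1) (-(-(-1))) (iteratedDeriv 2 h) hw e2
  have e4 : ∀ w ∈ Set.Ioo (-1:ℝ) 1, iteratedDeriv 4 h w = ((((((σ-1)-1)-1)+2)*((((σ-1)-1)+2)*(((σ-1)+2)*((σ+2)*σ))))*w^2 + (2*((((σ-1)-1)+2)*(((σ-1)+2)*((σ+2)*σ)))+((((σ-1)-1)-1)+1)*(2*(((σ-1)+2)*((σ+2)*σ))+(((σ-1)-1)+1)*(2*((σ+2)*σ)+((σ-1)+1)*(2*σ+(σ+1)*(-σ)))))*w + ((2*(((σ-1)+2)*((σ+2)*σ))+(((σ-1)-1)+1)*(2*((σ+2)*σ)+((σ-1)+1)*(2*σ+(σ+1)*(-σ))))+(((σ-1)-1)-1)*((2*((σ+2)*σ)+((σ-1)+1)*(2*σ+(σ+1)*(-σ)))+((σ-1)-1)*((2*σ+(σ+1)*(-σ))+(σ-1)*((-σ)+σ*1)))))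 * (1+w)^((((σ-1)-1)-1)-1) + (-(-(-(-(-1))))) * (((((((σ-1)-1)-1)+2)*((((σ-1)-1)+2)*(((σ-1)+2)*((σ+2)*σ))))*w^2 - (2*((((σ-1)-1)+2)*(((σ-1)+2)*((σ+2)*σ)))+((((σ-1)-1)-1)+1)*(2*(((σ-1)+2)*((σ+2)*σ))+(((σ-1)-1)+1)*(2*((σ+2)*σ)+((σ-1)+1)*(2*σ+(σ+1)*(-σ)))))*w + ((2*(((σ-1)+2)*((σ+2)*σ))+(((σ-1)-1)+1)*(2*((σ+2)*σ)+((σ-1)+1)*(2*σ+(σ+1)*(-σ))))+(((σ-1)-1)-1)*((2*((σ+2)*σ)+((σ-1)+1)*(2*σ+(σ+1)*(-σ)))+((σ-1)-1)*((2*σ+(σ+1)*(-σ))+(σ-1)*((-σ)+σ*1))))) * (1-w)^((((σ-1)-1)-1)-1)) := by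
    intro w hw
    rw [show iteratedDeriv 4 h = deriv (iteratedDeriv 3 h) from iteratedDeriv_succ]
    exact deriv_step ((((σ-1)-1)+2)*(((σ-1)+2)*((σ+2)*σ))) (2*(((σ-1)+2)*((σ+2)*σ))+(((σ-1)-1)+1)*(2*((σ+2)*σ)+((σ-1)+1)*(2*σ+(σ+1)*(-σ)))) ((2*((σ+2)*σ)+((σ-1)+1)*(2*σ+(σ+1)*(-σ)))+((σ-1)-1)*((2*σ+(σ+1)*(-σ))+(σ-1)*((-σ)+σ*1))) (((σ-1)-1)-1) (-(-(-(-1)))) (iteratedDeriv 3 h) hw e3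
  have e5 : ∀ w ∈ Set.Ioo (-1:ℝ) 1, iteratedDeriv 5 h w = (((((((σ-1)-1)-1)-1)+2)*(((((σ-1)-1)-1)+2)*((((σ-1)-1)+2)*(((σ-1)+2)*((σ+2)*σ)))))*w^2 + (2*(((((σ-1)-1)-1)+2)*((((σ-1)-1)+2)*(((σ-1)+2)*((σ+2)*σ))))+(((((σ-1)-1)-1)-1)+1)*(2*((((σ-1)-1)+2)*(((σ-1)+2)*((σ+2)*σ)))+((((σ-1)-1)-1)+1)*(2*(((σ-1)+2)*((σ+2)*σ))+(((σ-1)-1)+1)*(2*((σ+2)*σ)+((σ-1)+1)*(2*σ+(σ+1)*(-σ))))))*w + ((2*((((σ-1)-1)+2)*(((σ-1)+2)*((σ+2)*σ)))+((((σ-1)-1)-1)+1)*(2*(((σ-1)+2)*((σ+2)*σ))+(((σ-1)-1)+1)*(2*((σ+2)*σ)+((σ-1)+1)*(2*σ+(σ+1)*(-σ)))))+((((σ-1)-1)-1)-1)*((2*(((σ-1)+2)*((σ+2)*σ))+(((σ-1)-1)+1)*(2*((σ+2)*σ)+((σ-1)+1)*(2*σ+(σ+1)*(-σ))))+(((σ-1)-1)-1)*((2*((σ+2)*σ)+((σ-1)+1)*(2*σ+(σ+1)*(-σ)))+((σ-1)-1)*((2*σ+(σ+1)*(-σ))+(σ-1)*((-σ)+σ*1))))))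 * (1+w)^(((((σ-1)-1)-1)-1)-1) + (-(-(-(-(-(-1)))))) * ((((((((σ-1)-1)-1)-1)+2)*(((((σ-1)-1)-1)+2)*((((σ-1)-1)+2)*(((σ-1)+2)*((σ+2)*σ)))))*w^2 - (2*(((((σ-1)-1)-1)+2)*((((σ-1)-1)+2)*(((σ-1)+2)*((σ+2)*σ))))+(((((σ-1)-1)-1)-1)+1)*(2*((((σ-1)-1)+2)*(((σ-1)+2)*((σ+2)*σ)))+((((σ-1)-1)-1)+1)*(2*(((σ-1)+2)*((σ+2)*σ))+(((σ-1)-1)+1)*(2*((σ+2)*σ)+((σ-1)+1)*(2*σ+(σ+1)*(-σ))))))*w + ((2*((((σ-1)-1)+2)*(((σ-1)+2)*((σ+2)*σ)))+((((σ-1)-1)-1)+1)*(2*(((σ-1)+2)*((σ+2)*σ))+(((σ-1)-1)+1)*(2*((σ+2)*σ)+((σ-1)+1)*(2*σ+(σ+1)*(-σ)))))+((((σ-1)-1)-1)-1)*((2*(((σ-1)+2)*((σ+2)*σ))+(((σ-1)-1)+1)*(2*((σ+2)*σ)+((σ-1)+1)*(2*σ+(σ+1)*(-σ))))+(((σ-1)-1)-1)*((2*((σ+2)*σ)+((σ-1)+1)*(2*σ+(σ+1)*(-σ)))+((σ-1)-1)*((2*σ+(σ+1)*(-σ))+(σ-1)*((-σ)+σ*1))))))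 * (1-w)^(((((σ-1)-1)-1)-1)-1)) := by
    intro w hw
    rw [show iteratedDeriv 5 h = deriv (iteratedDeriv 4 h) from iteratedDeriv_succ]
    exact deriv_step (((((σ-1)-1)-1)+2)*((((σ-1)-1)+2)*(((σ-1)+2)*((σ+2)*σ)))) (2*((((σ-1)-1)+2)*(((σ-1)+2)*((σ+2)*σ)))+((((σ-1)-1)-1)+1)*(2*(((σ-1)+2)*((σ+2)*σ))+(((σ-1)-1)+1)*(2*((σ+2)*σ)+((σ-1)+1)*(2*σ+(σ+1)*(-σ))))) ((2*(((σ-1)+2)*((σ+2)*σ))+(((σ-1)-1)+1)*(2*((σ+2)*σ)+((σ-1)+1)*(2*σ+(σ+1)*(-σ))))+(((σ-1)-1)-1)*((2*((σ+2)*σ)+((σ-1)+1)*(2*σ+(σ+1)*(-σ)))+((σ-1)-1)*((2*σ+(σ+1)*(-σ))+(σ-1)*((-σ)+σ*1)))) ((((σ-1)-1)-1)-1) (-(-(-(-(-1))))) (iteratedDeriv 4 h) hw e4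
  have h0mem : (0:ℝ) ∈ Set.Ioo (-1:ℝ) 1 := by norm_num
  have hs : Real.sqrt 13 ^ 2 = 13 := Real.sq_sqrt (by norm_num)
  subst hσ
  refine ⟨?_, ?_, ?_, by positivity⟩
  · rw [e3 0 h0mem]
    simp only [add_zero, sub_zero, Real.one_rpow]
    linear_combination (-3/2 - Real.sqrt 13 / 2) * hs
  · rw [e4 0 h0mem]
    simp only [add_zero, sub_zero, Real.one_rpow]
    ring
  · rw [e5 0 h0mem]
    simp only [add_zero, sub_zero, Real.one_rpow]
    linear_combination (99/4 + 57/4 * Real.sqrt 13 + 5/4 * Real.sqrt 13 ^ 2 - 1/4 * Real.sqrt 13 ^ 3) * hs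
end

section
/- Let σ > 0 and Q(z) = −(4σ+2)·z·(1−z²)^σ + (1+z)^{2σ+1} − (1−z)^{2σ+1} for z ∈ (−1,1). Then Q(0) = 0, Q(−z) = −Q(z), and Q′(z) = (2σ+1)·[4z²σ(1−z²)^{σ−1} + ((1−z)^σ − (1+z)^σ)²], which is strictly positive for every z ∈ (−1,1) with z ≠ 0. In particular Q(z) > 0 for z ∈ (0,1) and Q(z) < 0 for z ∈ (−1,0). -/
open Real Set

private lemma stmt13_deriv (σ : ℝ) (Q : ℝ → ℝ)
    (hQ : ∀ z : ℝ, Q z = -((4 * σ + 2) * z * (1 - z ^ 2) ^ σ)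
        + (1 + z) ^ (2 * σ + 1) - (1 - z) ^ (2 * σ + 1)) :
    ∀ z ∈ Set.Ioo (-1 : ℝ) 1, HasDerivAt Q ((2 * σ + 1) *
        (4 * z ^ 2 * σ * (1 - z ^ 2) ^ (σ - 1) + ((1 - z) ^ σ - (1 + z) ^ σ) ^ 2)) z := by
  intro z hz
  have hz1 : (0:ℝ) < 1 - z := by linarith [hz.2]
  have hz2 : (0:ℝ) < 1 + z := by linarith [hz.1]
  have hz3 : (0:ℝ) < 1 - z ^ 2 := by nlinarith
  have hQ' : Q = fun z : ℝ => -((4 * σ + 2) * z * (1 - z ^ 2) ^ σ)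
        + (1 + z) ^ (2 * σ + 1) - (1 - z) ^ (2 * σ + 1) := funext hQ
  rw [hQ']
  -- derivative of (1 - z^2)^σ
  have d1 : HasDerivAt (fun z : ℝ => (1 - z ^ 2)) (-(2 * z ^ 1)) z := by
    simpa using (hasDerivAt_pow 2 z).const_sub 1
  have d2 : HasDerivAt (fun z : ℝ => (1 - z ^ 2) ^ σ)
      ((-(2 * z ^ 1)) * σ * (1 - z ^ 2) ^ (σ - 1)) z :=
    d1.rpow_const (Or.inl hz3.ne')
  have d3 : HasDerivAt (fun z : ℝ => (4 * σ + 2) * z * (1 - z ^ 2) ^ σ)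
      ((4 * σ + 2) * (1 * ((1 - z ^ 2) ^ σ) + z * ((-(2 * z ^ 1)) * σ * (1 - z ^ 2) ^ (σ - 1)))) z := by
    simpa [mul_assoc] using ((hasDerivAt_id z).mul d2).const_mul (4 * σ + 2)
  have d4 : HasDerivAt (fun z : ℝ => (1 + z) ^ (2 * σ + 1))
      (1 * (2 * σ + 1) * (1 + z) ^ (2 * σ + 1 - 1)) z :=
    (HasDerivAt.const_add 1 (hasDerivAt_id z)).rpow_const (Or.inl hz2.ne')
  have d5 : HasDerivAt (fun z : ℝ => (1 - z) ^ (2 * σ + 1))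
      ((-1) * (2 * σ + 1) * (1 - z) ^ (2 * σ + 1 - 1)) z := by
    have : HasDerivAt (fun z : ℝ => 1 - z) (-1) z := by
      simpa using (hasDerivAt_id z).const_sub 1
    exact this.rpow_const (Or.inl hz1.ne')
  have D := (d3.neg.add d4).sub d5
  convert D using 1
  case e'_4 => rfl
  case e'_5 => rfl
  case e'_8 => rfl
  have e1 : (1 - z ^ 2) ^ σ = (1 - z) ^ σ * (1 + z) ^ σ := by
    rw [← Real.mul_rpow hz1.le hz2.le, show (1 - z) * (1 + z) = 1 - z ^ 2 by ring]
  have e2 : (1 + z) ^ (2 * σ + 1 - 1) = ((1 + z) ^ σ) ^ 2 := by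
    rw [sq, ← Real.rpow_add hz2]; congr 1; ring
  have e3 : (1 - z) ^ (2 * σ + 1 - 1) = ((1 - z) ^ σ) ^ 2 := by
    rw [sq, ← Real.rpow_add hz1]; congr 1; ring
  rw [e1, e2, e3]
  ring

/-- oddness of `Q`, the formula for `Q′`, its strict positivity away
from `0`, and the resulting sign of `Q` on `(−1,1)`. -/
theorem stmt_13 (σ : ℝ) (hσ : 0 < σ) (Q : ℝ → ℝ)
    (hQ : ∀ z : ℝ, Q z = -((4 * σ + 2) * z * (1 - z ^ 2) ^ σ)
        + (1 + z) ^ (2 * σ + 1) - (1 - z) ^ (2 * σ + 1)) :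
    Q 0 = 0 ∧
    (∀ z ∈ Set.Ioo (-1 : ℝ) 1, Q (-z) = -Q z) ∧
    (∀ z ∈ Set.Ioo (-1 : ℝ) 1,
      deriv Q z = (2 * σ + 1) *
        (4 * z ^ 2 * σ * (1 - z ^ 2) ^ (σ - 1) + ((1 - z) ^ σ - (1 + z) ^ σ) ^ 2)) ∧
    (∀ z ∈ Set.Ioo (-1 : ℝ) 1, z ≠ 0 → 0 < deriv Q z) ∧
    (∀ z ∈ Set.Ioo (0 : ℝ) 1, 0 < Q z) ∧
    (∀ z ∈ Set.Ioo (-1 : ℝ) 0, Q z < 0) := by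
  have hkey := stmt13_deriv σ Q hQ
  have hQ0 : Q 0 = 0 := by rw [hQ]; norm_num
  have hodd : ∀ z : ℝ, Q (-z) = -Q z := by
    intro z
    rw [hQ, hQ, show (1:ℝ) + -z = 1 - z by ring, show (1:ℝ) - -z = 1 + z by ring,
      show (-z) ^ 2 = z ^ 2 by ring]
    ring
  have hderiv : ∀ z ∈ Set.Ioo (-1 : ℝ) 1,
      deriv Q z = (2 * σ + 1) *
        (4 * z ^ 2 * σ * (1 - z ^ 2) ^ (σ - 1) + ((1 - z) ^ σ - (1 + z) ^ σ) ^ 2) :=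
    fun z hz => (hkey z hz).deriv
  have hpos : ∀ z ∈ Set.Ioo (-1 : ℝ) 1, z ≠ 0 → 0 < deriv Q z := by
    intro z hz hz0
    rw [hderiv z hz]
    have hz3 : (0:ℝ) < 1 - z ^ 2 := by nlinarith [hz.1, hz.2]
    have h1 : 0 < 4 * z ^ 2 * σ * (1 - z ^ 2) ^ (σ - 1) := by
      have := Real.rpow_pos_of_pos hz3 (σ - 1)
      positivity
    nlinarith [sq_nonneg ((1 - z) ^ σ - (1 + z) ^ σ)]
  have hQpos : ∀ z ∈ Set.Ioo (0 : ℝ) 1, 0 < Q z := by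
    intro z hz
    have hsub : Set.Icc (0:ℝ) z ⊆ Set.Ioo (-1:ℝ) 1 := by
      intro x hx; exact ⟨by linarith [hx.1], by linarith [hx.2, hz.2]⟩
    have hmono : StrictMonoOn Q (Set.Icc 0 z) := by
      apply strictMonoOn_of_deriv_pos (convex_Icc 0 z)
      · exact fun x hx => (hkey x (hsub hx)).continuousAt.continuousWithinAt
      · intro x hx
        rw [interior_Icc] at hx
        exact hpos x (hsub (Set.mem_Icc_of_Ioo hx)) (ne_of_gt hx.1)
    have := hmono (Set.left_mem_Icc.2 hz.1.le) (Set.right_mem_Icc.2 hz.1.le) hz.1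
    rwa [hQ0] at this
  refine ⟨hQ0, fun z _ => hodd z, hderiv, hpos, hQpos, ?_⟩
  intro z hz
  have h : 0 < Q (-z) := hQpos (-z) ⟨by linarith [hz.2], by linarith [hz.1]⟩
  rw [hodd z] at h
  linarith
end

section
/- Consider the Hamiltonian H(θ,z) = −√(1−z²)·cos θ + (η/(σ+1))·[((1+z)/2)^{σ+1} + ((1−z)/2)^{σ+1}] on (θ,z) ∈ ℝ × (−1,1), with σ > 0 and η ∈ ℝ. At the stationary point (θ, z) = (0, 0), the determinant of the linearization matrix (Hessian-type matrix with zero trace) equals 1 + η·σ/2^σ; at the stationary point (θ, z) = (π, 0) it equals 1 − η·σ/2^σ. Hence the symmetric state (0,0) is a linearly stable center iff η > −2^σ/σ and the antisymmetric state (π,0) is a linearly stable center iff η < 2^σ/σ. -/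
open Real Filter Set

private lemma derivA (p z : ℝ) (hz : -1 < z) :
    HasDerivAt (fun z : ℝ => ((1 + z) / 2) ^ p)
      (p * ((1 + z) / 2) ^ (p - 1) * (1 / 2)) z := by
  have hpos : (0 : ℝ) < (1 + z) / 2 := by linarith
  have h1 : HasDerivAt (fun z : ℝ => (1 + z) / 2) (1 / 2) z := by
    simpa using ((hasDerivAt_id z).const_add 1).div_const 2
  convert h1.rpow_const (Or.inl hpos.ne') using 1
  ring

private lemma derivB (p z : ℝ) (hz : z < 1) :
    HasDerivAt (fun z : ℝ => ((1 - z) / 2) ^ p)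
      (p * ((1 - z) / 2) ^ (p - 1) * (-1 / 2)) z := by
  have hpos : (0 : ℝ) < (1 - z) / 2 := by linarith
  have h1 : HasDerivAt (fun z : ℝ => (1 - z) / 2) (-1 / 2) z := by
    have := ((hasDerivAt_id z).const_sub 1).div_const 2
    simpa using this
  convert h1.rpow_const (Or.inl hpos.ne') using 1
  ring

private lemma derivS (z : ℝ) (hz1 : -1 < z) (hz2 : z < 1) :
    HasDerivAt (fun z : ℝ => Real.sqrt (1 - z ^ 2))
      (-(2 * z) / (2 * Real.sqrt (1 - z ^ 2))) z := by
  have hpos : (0 : ℝ) < 1 - z ^ 2 := by nlinarith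
  have h1 : HasDerivAt (fun z : ℝ => 1 - z ^ 2) (-(2 * z)) z := by
    simpa using ((hasDerivAt_pow 2 z)).const_sub 1
  exact h1.sqrt hpos.ne'

private lemma derivH (σ η c z : ℝ) (hσ : 0 < σ) (hz1 : -1 < z) (hz2 : z < 1) :
    HasDerivAt (fun z : ℝ => -Real.sqrt (1 - z ^ 2) * c +
      η / (σ + 1) * (((1 + z) / 2) ^ (σ + 1) + ((1 - z) / 2) ^ (σ + 1)))
    (z / Real.sqrt (1 - z ^ 2) * c +
      η / 2 * (((1 + z) / 2) ^ σ - ((1 - z) / 2) ^ σ)) z := by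
  have hpos : (0 : ℝ) < 1 - z ^ 2 := by nlinarith
  have hs : (0 : ℝ) < Real.sqrt (1 - z ^ 2) := Real.sqrt_pos.mpr hpos
  have h1 := ((derivS z hz1 hz2).neg.mul_const c).add
    (((derivA (σ + 1) z hz1).add (derivB (σ + 1) z hz2)).const_mul (η / (σ + 1)))
  have he : σ + 1 - 1 = σ := by ring
  rw [he] at h1
  refine h1.congr_deriv ?_
  have hσ1 : σ + 1 ≠ 0 := by positivity
  field_simp
  ring

private lemma sqone : Real.sqrt (1 - (0 : ℝ) ^ 2) = 1 := by norm_num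

/-- determinant of the zero-trace linearization of the two-level
Hamiltonian at the symmetric and antisymmetric stationary points, and the
resulting stability criteria. -/
theorem stmt_14 (σ η : ℝ) (hσ : 0 < σ) (H : ℝ → ℝ → ℝ)
    (hH : ∀ θ z : ℝ, H θ z = -Real.sqrt (1 - z ^ 2) * Real.cos θ +
      η / (σ + 1) * (((1 + z) / 2) ^ (σ + 1) + ((1 - z) / 2) ^ (σ + 1)))
    (D : ℝ → ℝ → ℝ)
    (hD : ∀ θ₀ z₀ : ℝ, D θ₀ z₀ =
      iteratedDeriv 2 (fun θ => H θ z₀) θ₀ * iteratedDeriv 2 (fun z => H θ₀ z) z₀ -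
        (deriv (fun θ => deriv (fun z => H θ z) z₀) θ₀) ^ 2) :
    D 0 0 = 1 + η * σ / (2 : ℝ) ^ σ ∧
    D Real.pi 0 = 1 - η * σ / (2 : ℝ) ^ σ ∧
    (0 < D 0 0 ↔ -((2 : ℝ) ^ σ / σ) < η) ∧
    (0 < D Real.pi 0 ↔ η < (2 : ℝ) ^ σ / σ) := by
  have hP : (0 : ℝ) < (2 : ℝ) ^ σ := Real.rpow_pos_of_pos two_pos σ
  -- the z-derivative of H θ · equals the explicit formula on Ioo (-1) 1
  have hfz : ∀ θ : ℝ, (fun z => H θ z) = fun z : ℝ =>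
      -Real.sqrt (1 - z ^ 2) * Real.cos θ +
      η / (σ + 1) * (((1 + z) / 2) ^ (σ + 1) + ((1 - z) / 2) ^ (σ + 1)) := by
    intro θ; funext z; exact hH θ z
  have hdz : ∀ θ z : ℝ, -1 < z → z < 1 → deriv (fun z => H θ z) z =
      z / Real.sqrt (1 - z ^ 2) * Real.cos θ +
      η / 2 * (((1 + z) / 2) ^ σ - ((1 - z) / 2) ^ σ) := by
    intro θ z h1 h2
    rw [hfz θ]
    exact (derivH σ η (Real.cos θ) z hσ h1 h2).deriv
  -- cross derivative vanishes
  have hzero : ∀ θ : ℝ, deriv (fun z => H θ z) 0 = 0 := by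
    intro θ
    rw [hdz θ 0 (by norm_num) (by norm_num)]
    norm_num
  have hcross : ∀ θ₀ : ℝ, deriv (fun θ => deriv (fun z => H θ z) 0) θ₀ = 0 := by
    intro θ₀
    have : (fun θ => deriv (fun z => H θ z) 0) = fun _ : ℝ => (0 : ℝ) := funext hzero
    rw [this, deriv_const]
  -- second derivative in z
  have hzz : ∀ θ₀ : ℝ, iteratedDeriv 2 (fun z => H θ₀ z) 0 =
      Real.cos θ₀ + η * σ / (2 : ℝ) ^ σ := by
    intro θ₀
    have h2d : iteratedDeriv 2 (fun z => H θ₀ z) 0 =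
        deriv (deriv (fun z => H θ₀ z)) 0 := by
      rw [iteratedDeriv_succ, iteratedDeriv_one]
    rw [h2d]
    set g : ℝ → ℝ := fun z => z / Real.sqrt (1 - z ^ 2) * Real.cos θ₀ +
      η / 2 * (((1 + z) / 2) ^ σ - ((1 - z) / 2) ^ σ) with hg
    have hev : deriv (fun z => H θ₀ z) =ᶠ[nhds (0 : ℝ)] g := by
      filter_upwards [Ioo_mem_nhds (by norm_num : (-1 : ℝ) < 0) (by norm_num : (0:ℝ) < 1)]
        with z hz
      exact hdz θ₀ z hz.1 hz.2
    rw [hev.deriv_eq]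
    -- compute deriv g 0
    have ht1 : HasDerivAt (fun z : ℝ => z / Real.sqrt (1 - z ^ 2))
        ((1 * Real.sqrt (1 - (0:ℝ) ^ 2) - 0 * (-(2 * 0) / (2 * Real.sqrt (1 - (0:ℝ) ^ 2)))) /
          Real.sqrt (1 - (0:ℝ) ^ 2) ^ 2) 0 := by
      exact (hasDerivAt_id 0).div (derivS 0 (by norm_num) (by norm_num))
        (by rw [sqone]; norm_num)
    have ht2 := ((derivA σ 0 (by norm_num)).sub (derivB σ 0 (by norm_num))).const_mul (η / 2)
    have hsum := (ht1.mul_const (Real.cos θ₀)).add ht2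
    have := hsum.deriv
    rw [show deriv g 0 = _ from this]
    have hhalf : ((1 : ℝ) / 2) ^ (σ - 1) = 2 / (2 : ℝ) ^ σ := by
      rw [one_div, Real.inv_rpow (by norm_num : (0:ℝ) ≤ 2), Real.rpow_sub two_pos,
        Real.rpow_one, inv_div]
    rw [sqone]
    norm_num
    rw [hhalf]
    field_simp
    ring
  -- second derivative in θ
  have hθθ : ∀ θ₀ : ℝ, iteratedDeriv 2 (fun θ => H θ 0) θ₀ = Real.cos θ₀ := by
    intro θ₀
    set C : ℝ := η / (σ + 1) * (((1 + (0:ℝ)) / 2) ^ (σ + 1) + ((1 - (0:ℝ)) / 2) ^ (σ + 1))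
      with hC
    have hf : (fun θ => H θ 0) = fun θ : ℝ => -Real.cos θ + C := by
      funext θ
      rw [hH, sqone]
      ring
    have hd1 : deriv (fun θ : ℝ => -Real.cos θ + C) = Real.sin := by
      funext θ
      have : HasDerivAt (fun θ : ℝ => -Real.cos θ + C) (Real.sin θ) θ := by
        simpa using (Real.hasDerivAt_cos θ).neg.add_const C
      exact this.deriv
    rw [iteratedDeriv_succ, iteratedDeriv_one, hf, hd1, Real.deriv_sin]
  -- assemble
  have hD00 : D 0 0 = 1 + η * σ / (2 : ℝ) ^ σ := by
    rw [hD, hθθ, hzz, hcross, Real.cos_zero]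
    ring
  have hDpi : D Real.pi 0 = 1 - η * σ / (2 : ℝ) ^ σ := by
    rw [hD, hθθ, hzz, hcross, Real.cos_pi]
    ring
  refine ⟨hD00, hDpi, ?_, ?_⟩
  · rw [hD00]
    have h1 : 1 + η * σ / (2 : ℝ) ^ σ = ((2 : ℝ) ^ σ + η * σ) / (2 : ℝ) ^ σ := by
      field_simp
    rw [h1, lt_div_iff₀ hP, zero_mul, ← neg_div, div_lt_iff₀ hσ]
    constructor <;> intro h <;> nlinarith
  · rw [hDpi]
    have h1 : 1 - η * σ / (2 : ℝ) ^ σ = ((2 : ℝ) ^ σ - η * σ) / (2 : ℝ) ^ σ := by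
      field_simp
    rw [h1, lt_div_iff₀ hP, zero_mul, lt_div_iff₀ hσ]
    constructor <;> intro h <;> nlinarith
end

section
/- Let σ > 0 and for θ = 0 consider det Hess(z) = √(1−z²)·[(1−z²)^{−3/2} + (ησ/4)·(((1+z)/2)^{σ−1} + ((1−z)/2)^{σ−1})]. Substituting η = η(z) = −(2z/√(1−z²))·[((1+z)/2)^σ − ((1−z)/2)^σ]^{−1}·(−1) appropriately (i.e. the root of f(z,η)=0), one obtains det Hess(z)|_{η=η(z)} = (g(z) − g(−z)) / ((1−z²)·[(1+z)^σ − (1−z)^σ]), where g(z) = (σz² − σz + 1)(1+z)^σ. -/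
/-- along the bifurcation branch `η = η(z)`, the determinant of the
Hessian at `θ = 0` equals `(g(z) − g(−z)) / ((1−z²)[(1+z)^σ − (1−z)^σ])`. -/
theorem stmt_15 (σ : ℝ) (hσ : 0 < σ) (η g detH : ℝ → ℝ)
    (hη : ∀ z : ℝ, η z = -(2 * z / Real.sqrt (1 - z ^ 2)) *
      (((1 + z) / 2) ^ σ - ((1 - z) / 2) ^ σ)⁻¹)
    (hg : ∀ z : ℝ, g z = (σ * z ^ 2 - σ * z + 1) * (1 + z) ^ σ)
    (hdet : ∀ z : ℝ, detH z = Real.sqrt (1 - z ^ 2) *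
      ((1 - z ^ 2) ^ (-(3 : ℝ) / 2) +
        η z * σ / 4 * (((1 + z) / 2) ^ (σ - 1) + ((1 - z) / 2) ^ (σ - 1)))) :
    ∀ z ∈ Set.Ioo (0 : ℝ) 1,
      detH z = (g z - g (-z)) / ((1 - z ^ 2) * ((1 + z) ^ σ - (1 - z) ^ σ)) := by
  intro z hz
  obtain ⟨hz0, hz1⟩ := hz
  have ha : (0:ℝ) < 1 + z := by linarith
  have hb : (0:ℝ) < 1 - z := by linarith
  have ht : (0:ℝ) < 1 - z ^ 2 := by nlinarith
  have hs : 0 < Real.sqrt (1 - z ^ 2) := Real.sqrt_pos.mpr ht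
  have hAB : (1 - z) ^ σ < (1 + z) ^ σ :=
    Real.rpow_lt_rpow hb.le (by linarith) hσ
  have h2 : (0:ℝ) < 2 := two_pos
  have hC : (0:ℝ) < (2:ℝ) ^ σ := Real.rpow_pos_of_pos h2 σ
  have hdivA : ((1 + z) / 2) ^ σ = (1 + z) ^ σ / 2 ^ σ := Real.div_rpow ha.le h2.le σ
  have hdivB : ((1 - z) / 2) ^ σ = (1 - z) ^ σ / 2 ^ σ := Real.div_rpow hb.le h2.le σ
  have hA1 : ((1 + z) / 2) ^ (σ - 1) = (1 + z) ^ σ / 2 ^ σ * (2 / (1 + z)) := by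
    rw [Real.rpow_sub (by positivity), Real.rpow_one, Real.div_rpow ha.le h2.le]
    field_simp
  have hB1 : ((1 - z) / 2) ^ (σ - 1) = (1 - z) ^ σ / 2 ^ σ * (2 / (1 - z)) := by
    rw [Real.rpow_sub (by positivity), Real.rpow_one, Real.div_rpow hb.le h2.le]
    field_simp
  have hsqrt : Real.sqrt (1 - z ^ 2) * (1 - z ^ 2) ^ (-(3:ℝ) / 2)
      = (1 - z ^ 2)⁻¹ := by
    rw [Real.sqrt_eq_rpow, ← Real.rpow_add ht]
    norm_num
    rw [Real.rpow_neg_one]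
  rw [hdet, hη, hg, hg, hdivA, hdivB, hA1, hB1, mul_add, hsqrt]
  have hABne : (1 + z) ^ σ - (1 - z) ^ σ ≠ 0 := by linarith
  have hABne' : (1 + z) ^ σ / 2 ^ σ - (1 - z) ^ σ / 2 ^ σ ≠ 0 := by
    rw [div_sub_div_same]
    exact div_ne_zero hABne hC.ne'
  field_simp
  ring_nf
end

section
/- Let α < 0 and a > 0. The eigenvalue equation for the Schrödinger operator H_α = −d²/dx² + α·δ_{−a} + α·δ_{+a} on ℝ has exactly two negative eigenvalues if and only if a > −1/α; they are E₁ = −(1/(4a²))[W(−aα e^{aα}) − aα]² and E₂ = −(1/(4a²))[W(aα e^{aα}) − aα]², where W is the principal branch of the Lambert W function, and E₁ < E₂ < 0. -/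
open Real Filter Set MeasureTheory Topology

/-- `E` is an eigenvalue of the Schrödinger operator `−d²/dx² + α δ_{−a} + α δ_{+a}`:
there is a nonzero continuous `L²` eigenfunction, twice differentiable away from
`±a`, satisfying `−ψ″ = Eψ` off `±a` together with the jump conditions
`ψ′(±a+0) − ψ′(±a−0) = α ψ(±a)`. -/
def IsDeltaEigen (α a E : ℝ) : Prop :=
  ∃ ψ : ℝ → ℝ, ψ ≠ 0 ∧ Continuous ψ ∧
    MeasureTheory.MemLp ψ 2 MeasureTheory.volume ∧
    (∀ x : ℝ, x ≠ a → x ≠ -a →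
      DifferentiableAt ℝ ψ x ∧ DifferentiableAt ℝ (deriv ψ) x ∧
      -deriv (deriv ψ) x = E * ψ x) ∧
    (∃ dp dm : ℝ,
      Filter.Tendsto (deriv ψ) (nhdsWithin a (Set.Ioi a)) (nhds dp) ∧
      Filter.Tendsto (deriv ψ) (nhdsWithin a (Set.Iio a)) (nhds dm) ∧
      dp - dm = α * ψ a) ∧
    (∃ dp dm : ℝ,
      Filter.Tendsto (deriv ψ) (nhdsWithin (-a) (Set.Ioi (-a))) (nhds dp) ∧
      Filter.Tendsto (deriv ψ) (nhdsWithin (-a) (Set.Iio (-a))) (nhds dm) ∧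
      dp - dm = α * ψ (-a))

lemma lam_ge (w : ℝ) : -Real.exp (-1) ≤ w * Real.exp w := by
  rcases le_or_gt 0 w with h | h
  · have := Real.exp_pos (-1)
    nlinarith [Real.exp_pos w, mul_nonneg h (Real.exp_pos w).le]
  · -- w < 0 : (1 - (w+1)) * exp(w+1) ≤ 1, i.e. -w * exp w * e ≤ 1
    have h1 : -w * Real.exp w ≤ Real.exp (-1) := by
      have h2 : 1 + -(w+1) ≤ Real.exp (-(w+1)) := by have := Real.add_one_le_exp (-(w+1)); linarith
      have h3 : Real.exp (w) * Real.exp (-(w+1)) = Real.exp (-1) := by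
        rw [← Real.exp_add]; ring_nf
      calc -w * Real.exp w = (1 + -(w+1)) * Real.exp w := by ring
        _ ≤ Real.exp (-(w+1)) * Real.exp w := by
            apply mul_le_mul_of_nonneg_right h2 (Real.exp_pos w).le
        _ = Real.exp (-1) := by rw [mul_comm]; exact h3
    linarith

lemma lamMono : StrictMonoOn (fun w : ℝ => w * Real.exp w) (Set.Ici (-1)) := by
  apply strictMonoOn_of_deriv_pos (convex_Ici _)
  · fun_prop
  · intro x hx
    rw [interior_Ici] at hx
    have : HasDerivAt (fun w : ℝ => w * Real.exp w) (1 * Real.exp x + x * Real.exp x) x :=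
      (hasDerivAt_id x).mul (Real.hasDerivAt_exp x)
    rw [this.deriv]
    nlinarith [Real.exp_pos x, mem_Ioi.mp hx]

lemma lamAnti : StrictAntiOn (fun w : ℝ => w * Real.exp w) (Set.Iic (-1)) := by
  apply strictAntiOn_of_deriv_neg (convex_Iic _)
  · fun_prop
  · intro x hx
    rw [interior_Iic] at hx
    have : HasDerivAt (fun w : ℝ => w * Real.exp w) (1 * Real.exp x + x * Real.exp x) x :=
      (hasDerivAt_id x).mul (Real.hasDerivAt_exp x)
    rw [this.deriv]
    nlinarith [Real.exp_pos x, mem_Iio.mp hx]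
lemma const_on {s : Set ℝ} (hs : IsOpen s) (hc : Convex ℝ s) {h : ℝ → ℝ}
    (hd : ∀ x ∈ s, HasDerivAt h 0 x) {x y : ℝ} (hx : x ∈ s) (hy : y ∈ s) :
    h x = h y := by
  apply hc.is_const_of_fderivWithin_eq_zero
    (fun z hz => ((hd z hz).differentiableAt).differentiableWithinAt)
    (fun z hz => ?_) hx hy
  rw [fderivWithin_of_isOpen hs hz]
  have := (hd z hz).hasFDerivAt.fderiv
  rw [this]
  ext t
  simp

lemma ode_form {β : ℝ} (hβ : 0 < β) {s : Set ℝ} (hs : IsOpen s) (hc : Convex ℝ s)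
    {f : ℝ → ℝ}
    (hf : ∀ x ∈ s, DifferentiableAt ℝ f x ∧ DifferentiableAt ℝ (deriv f) x ∧
      deriv (deriv f) x = β ^ 2 * f x) :
    ∃ A B : ℝ, ∀ x ∈ s, f x = A * Real.exp (β * x) + B * Real.exp (-(β * x)) := by
  rcases s.eq_empty_or_nonempty with rfl | ⟨x₀, hx₀⟩
  · exact ⟨0, 0, by simp⟩
  have hexp : ∀ x : ℝ, HasDerivAt (fun y : ℝ => Real.exp (β * y)) (β * Real.exp (β * x)) x := by
    intro x
    have h1 : HasDerivAt (fun y : ℝ => β * y) β x := by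
      simpa using (hasDerivAt_id x).const_mul β
    simpa [mul_comm] using h1.exp
  have hexp' : ∀ x : ℝ, HasDerivAt (fun y : ℝ => Real.exp (-(β * y)))
      (-β * Real.exp (-(β * x))) x := by
    intro x
    have h1 : HasDerivAt (fun y : ℝ => -(β * y)) (-β) x := by
      exact (by simpa using (hasDerivAt_id x).const_mul β : HasDerivAt (fun y : ℝ => β * y) β x).neg
    simpa [mul_comm] using h1.exp
  set g : ℝ → ℝ := fun x => (deriv f x - β * f x) * Real.exp (β * x) with hgdef
  have hgd : ∀ x ∈ s, HasDerivAt g 0 x := by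
    intro x hx
    obtain ⟨h1, h2, h3⟩ := hf x hx
    have hfd : HasDerivAt f (deriv f x) x := h1.hasDerivAt
    have hfd2 : HasDerivAt (deriv f) (β ^ 2 * f x) x := h3 ▸ h2.hasDerivAt
    have := (hfd2.sub (hfd.const_mul β)).mul (hexp x)
    refine this.congr_deriv ?_
    simp only [Pi.sub_apply]
    ring
  have hgc : ∀ x ∈ s, deriv f x - β * f x = g x₀ * Real.exp (-(β * x)) := by
    intro x hx
    have h : (deriv f x - β * f x) * Real.exp (β * x) = g x₀ := const_on hs hc hgd hx hx₀
    have hne : Real.exp (β * x) ≠ 0 := (Real.exp_pos _).ne'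
    rw [Real.exp_neg, eq_mul_inv_iff_mul_eq₀ hne]
    exact h
  set m : ℝ → ℝ := fun x => (f x + (g x₀ / (2*β)) * Real.exp (-(β * x))) * Real.exp (-(β * x))
    with hmdef
  have hmd : ∀ x ∈ s, HasDerivAt m 0 x := by
    intro x hx
    obtain ⟨h1, _, _⟩ := hf x hx
    have hfd : HasDerivAt f (deriv f x) x := h1.hasDerivAt
    have := ((hfd.add ((hexp' x).const_mul (g x₀ / (2*β)))).mul (hexp' x))
    refine this.congr_deriv ?_
    simp only [Pi.add_apply]
    have hdf : deriv f x = β * f x + g x₀ * Real.exp (-(β * x)) := by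
      linarith [hgc x hx]
    rw [hdf]
    have hb : β ≠ 0 := hβ.ne'
    field_simp
    ring
  refine ⟨m x₀, -(g x₀/(2*β)), fun x hx => ?_⟩
  have h : (f x + g x₀/(2*β) * Real.exp (-(β*x))) * Real.exp (-(β*x)) = m x₀ :=
    const_on hs hc hmd hx hx₀
  have hne : Real.exp (-(β * x)) ≠ 0 := (Real.exp_pos _).ne'
  have he : Real.exp (β*x) = (Real.exp (-(β*x)))⁻¹ := by
    rw [← Real.exp_neg, neg_neg]
  have h3 : f x + g x₀/(2*β) * Real.exp (-(β*x)) = m x₀ / Real.exp (-(β*x)) := by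
    rw [eq_div_iff hne]; exact h
  simp only [div_eq_mul_inv] at h3 ⊢
  rw [he]
  linarith
lemma sq_not_integrable {f : ℝ → ℝ} (hint : Integrable (fun x => f x ^ 2) volume)
    {S : Set ℝ} (hS : volume S = ⊤) (h1 : ∀ x ∈ S, 1 ≤ |f x|) : False := by
  have hsub : S ⊆ {x | 1 ≤ f x ^ 2} := by
    intro x hx
    have := h1 x hx
    simp only [mem_setOf_eq]
    calc (1:ℝ) = 1 * 1 := by ring
      _ ≤ |f x| * |f x| := mul_le_mul this this zero_le_one (abs_nonneg _)
      _ = f x ^ 2 := by rw [abs_mul_abs_self]; ring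
  have hlt := hint.measure_ge_lt_top one_pos
  have := measure_mono (μ := volume) hsub
  rw [hS] at this
  exact absurd (lt_of_le_of_lt this hlt) (lt_irrefl _)

lemma coeff_right {β a A B : ℝ} (hβ : 0 < β) {f : ℝ → ℝ}
    (hmem : MemLp f 2 volume) (hmeas : AEStronglyMeasurable f volume)
    (hform : ∀ x ∈ Ioi a, f x = A * Real.exp (β * x) + B * Real.exp (-(β * x))) :
    A = 0 := by
  by_contra hA
  have hint : Integrable (fun x => f x ^ 2) volume :=
    (memLp_two_iff_integrable_sq hmeas).1 hmem
  have hEexp : Tendsto (fun x : ℝ => Real.exp (β * x)) atTop atTop :=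
    Real.tendsto_exp_atTop.comp (Tendsto.const_mul_atTop hβ tendsto_id)
  have hzero : Tendsto (fun x : ℝ => |B| * Real.exp (-(β * x))) atTop (𝓝 0) := by
    have h2 : Tendsto (fun x : ℝ => Real.exp (-(β * x))) atTop (𝓝 0) := by
      simp only [Real.exp_neg]
      exact hEexp.inv_tendsto_atTop
    simpa using h2.const_mul |B|
  have hg : Tendsto (fun x => |A| * Real.exp (β * x) - |B| * Real.exp (-(β * x)))
      atTop atTop := by
    have h3 : Tendsto (fun x : ℝ => |A| * Real.exp (β * x)) atTop atTop :=
      Tendsto.const_mul_atTop (abs_pos.2 hA) hEexp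
    have := (hzero.neg).add_atTop h3
    refine this.congr (fun x => by ring)
  have habs : ∀ᶠ x in atTop, 1 ≤ |f x| := by
    filter_upwards [hg.eventually_ge_atTop 1, Ioi_mem_atTop a] with x h1 h2
    have hf := hform x h2
    have hup := abs_add_le (A * Real.exp (β * x) + B * Real.exp (-(β * x)))
      (-(B * Real.exp (-(β * x))))
    rw [add_neg_cancel_right] at hup
    have e1 : |A * Real.exp (β * x)| = |A| * Real.exp (β * x) := by
      rw [abs_mul, Real.abs_exp]
    have e2 : |-(B * Real.exp (-(β * x)))| = |B| * Real.exp (-(β * x)) := by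
      rw [abs_neg, abs_mul, Real.abs_exp]
    rw [hf]
    rw [e1, e2] at hup
    linarith
  obtain ⟨M, hM⟩ := eventually_atTop.1 habs
  exact sq_not_integrable hint (Real.volume_Ici (a := M)) (fun x hx => hM x hx)

lemma coeff_left {β a A B : ℝ} (hβ : 0 < β) {f : ℝ → ℝ}
    (hmem : MemLp f 2 volume) (hmeas : AEStronglyMeasurable f volume)
    (hform : ∀ x ∈ Iio a, f x = A * Real.exp (β * x) + B * Real.exp (-(β * x))) :
    B = 0 := by
  by_contra hB
  have hint : Integrable (fun x => f x ^ 2) volume :=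
    (memLp_two_iff_integrable_sq hmeas).1 hmem
  have hEexp : Tendsto (fun x : ℝ => Real.exp (-(β * x))) atBot atTop := by
    apply Real.tendsto_exp_atTop.comp
    exact (tendsto_neg_atBot_atTop).comp (Tendsto.const_mul_atBot hβ tendsto_id)
  have hzero : Tendsto (fun x : ℝ => |A| * Real.exp (β * x)) atBot (𝓝 0) := by
    have h2 : Tendsto (fun x : ℝ => Real.exp (β * x)) atBot (𝓝 0) := by
      have : (fun x : ℝ => Real.exp (β * x)) = fun x => (Real.exp (-(β * x)))⁻¹ := by
        funext x; rw [← Real.exp_neg, neg_neg]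
      rw [this]
      exact hEexp.inv_tendsto_atTop
    simpa using h2.const_mul |A|
  have hg : Tendsto (fun x => |B| * Real.exp (-(β * x)) - |A| * Real.exp (β * x))
      atBot atTop := by
    have h3 : Tendsto (fun x : ℝ => |B| * Real.exp (-(β * x))) atBot atTop :=
      Tendsto.const_mul_atTop (abs_pos.2 hB) hEexp
    have := (hzero.neg).add_atTop h3
    refine this.congr (fun x => by ring)
  have habs : ∀ᶠ x in atBot, 1 ≤ |f x| := by
    filter_upwards [hg.eventually_ge_atTop 1, Iio_mem_atBot a] with x h1 h2
    have hf := hform x h2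
    have hup := abs_add_le (A * Real.exp (β * x) + B * Real.exp (-(β * x)))
      (-(A * Real.exp (β * x)))
    have e0 : A * Real.exp (β * x) + B * Real.exp (-(β * x)) + -(A * Real.exp (β * x))
        = B * Real.exp (-(β * x)) := by ring
    rw [e0] at hup
    have e1 : |A * Real.exp (β * x)| = |A| * Real.exp (β * x) := by
      rw [abs_mul, Real.abs_exp]
    have e2 : |-(A * Real.exp (β * x))| = |A| * Real.exp (β * x) := by
      rw [abs_neg]; exact e1
    rw [hf]
    rw [e2] at hup
    have e3 : |B * Real.exp (-(β * x))| = |B| * Real.exp (-(β * x)) := by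
      rw [abs_mul, Real.abs_exp]
    rw [e3] at hup
    linarith
  obtain ⟨M, hM⟩ := eventually_atBot.1 habs
  exact sq_not_integrable hint (Real.volume_Iic (a := M)) (fun x hx => hM x hx)
lemma hasDerivAt_P (β c₁ c₂ x : ℝ) :
    HasDerivAt (fun y => c₁ * Real.exp (β*y) + c₂ * Real.exp (-(β*y)))
      ((β*c₁) * Real.exp (β*x) + (-(β*c₂)) * Real.exp (-(β*x))) x := by
  have h1 : HasDerivAt (fun y : ℝ => β * y) β x := by
    simpa using (hasDerivAt_id x).const_mul β
  have h2 : HasDerivAt (fun y : ℝ => -(β * y)) (-β) x := h1.neg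
  have := ((h1.exp.const_mul c₁).add (h2.exp.const_mul c₂))
  refine this.congr_deriv ?_
  ring

lemma continuous_P (β c₁ c₂ : ℝ) :
    Continuous (fun y => c₁ * Real.exp (β*y) + c₂ * Real.exp (-(β*y))) := by
  fun_prop

lemma deriv_P (β c₁ c₂ : ℝ) :
    deriv (fun y => c₁ * Real.exp (β*y) + c₂ * Real.exp (-(β*y)))
      = fun y => (β*c₁) * Real.exp (β*y) + (-(β*c₂)) * Real.exp (-(β*y)) :=
  funext fun x => (hasDerivAt_P β c₁ c₂ x).deriv

lemma eigen_piece {s : Set ℝ} (hs : IsOpen s) {ψ : ℝ → ℝ} {β c₁ c₂ : ℝ}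
    (h : ∀ y ∈ s, ψ y = c₁ * Real.exp (β*y) + c₂ * Real.exp (-(β*y))) :
    (∀ y ∈ s, deriv ψ y = (β*c₁) * Real.exp (β*y) + (-(β*c₂)) * Real.exp (-(β*y))) ∧
    ∀ x ∈ s, DifferentiableAt ℝ ψ x ∧ DifferentiableAt ℝ (deriv ψ) x ∧
      deriv (deriv ψ) x = β^2 * ψ x := by
  have hev : ∀ x ∈ s, ψ =ᶠ[𝓝 x] (fun y => c₁ * Real.exp (β*y) + c₂ * Real.exp (-(β*y))) :=
    fun x hx => eventually_of_mem (hs.mem_nhds hx) h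
  have hd1 : ∀ y ∈ s, deriv ψ y = (β*c₁) * Real.exp (β*y) + (-(β*c₂)) * Real.exp (-(β*y)) := by
    intro y hy
    rw [(hev y hy).deriv_eq, deriv_P]
  refine ⟨hd1, fun x hx => ?_⟩
  have hev2 : deriv ψ =ᶠ[𝓝 x]
      (fun y => (β*c₁) * Real.exp (β*y) + (-(β*c₂)) * Real.exp (-(β*y))) :=
    eventually_of_mem (hs.mem_nhds hx) hd1
  refine ⟨?_, ?_, ?_⟩
  · exact (Filter.EventuallyEq.differentiableAt_iff (hev x hx)).2
      (hasDerivAt_P β c₁ c₂ x).differentiableAt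
  · exact (Filter.EventuallyEq.differentiableAt_iff hev2).2
      (hasDerivAt_P β (β*c₁) (-(β*c₂)) x).differentiableAt
  · rw [hev2.deriv_eq, deriv_P, h x hx]
    ring

lemma tendsto_piece {x₀ : ℝ} {l : Filter ℝ} (hl : l ≤ 𝓝 x₀) {g : ℝ → ℝ} {β c₁ c₂ : ℝ}
    (h : ∀ᶠ y in l, g y = c₁ * Real.exp (β*y) + c₂ * Real.exp (-(β*y))) :
    Tendsto g l (𝓝 (c₁ * Real.exp (β*x₀) + c₂ * Real.exp (-(β*x₀)))) := by
  apply Tendsto.congr' (Filter.EventuallyEq.symm h)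
  exact ((continuous_P β c₁ c₂).continuousAt).tendsto.mono_left hl

lemma integrable_exp_abs {c : ℝ} (hc : 0 < c) :
    Integrable (fun x : ℝ => Real.exp (-(c * |x|))) volume := by
  set F : ℝ → ℝ := fun x => Real.exp (-(c * |x|)) with hF
  have hcont : Continuous F := by fun_prop
  have hIoi : IntegrableOn F (Ioi 0) := by
    apply (exp_neg_integrableOn_Ioi 0 hc).congr_fun _ measurableSet_Ioi
    intro x hx
    simp [hF, abs_of_pos (mem_Ioi.1 hx)]
  have hIci : IntegrableOn F (Ici 0) := (integrableOn_Ici_iff_integrableOn_Ioi (by simp)).2 hIoi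
  have hplus : Integrable ((Ici (0:ℝ)).indicator F) volume :=
    (integrable_indicator_iff measurableSet_Ici).2 hIci
  have hminus : Integrable (fun x => (Ici (0:ℝ)).indicator F (-x)) volume := hplus.comp_neg
  have hbound : ∀ x : ℝ, ‖F x‖ ≤ (Ici (0:ℝ)).indicator F x + (Ici (0:ℝ)).indicator F (-x) := by
    intro x
    have hFpos : 0 < F x := Real.exp_pos _
    rw [Real.norm_eq_abs, abs_of_pos hFpos]
    rcases le_or_gt 0 x with h | h
    · have h1 : (Ici (0:ℝ)).indicator F x = F x := indicator_of_mem (mem_Ici.2 h) F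
      have h2 : (0:ℝ) ≤ (Ici (0:ℝ)).indicator F (-x) :=
        indicator_nonneg (fun y _ => (Real.exp_pos _).le) _
      linarith
    · have h1 : (Ici (0:ℝ)).indicator F (-x) = F (-x) :=
        indicator_of_mem (mem_Ici.2 (by linarith)) F
      have h2 : F (-x) = F x := by simp [hF]
      have h3 : (0:ℝ) ≤ (Ici (0:ℝ)).indicator F x :=
        indicator_nonneg (fun y _ => (Real.exp_pos _).le) _
      rw [h1, h2]
      linarith
  exact (hplus.add hminus).mono' hcont.aestronglyMeasurable (Filter.Eventually.of_forall hbound)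

lemma key2 {β α σ p q : ℝ} (hpq : p * q = 1) (key : 2*β + α*(1+σ*(q*q)) = 0) :
    β*p = -(α/2)*(p+σ*q) := by
  linear_combination (p/2) * key - (α*σ*q/2) * hpq

lemma key3 {β α σ p q : ℝ} (hpq : p * q = 1) (hσ2 : σ^2 = 1)
    (key : 2*β + α*(1+σ*(q*q)) = 0) :
    β*σ*p = -(α/2)*(q+σ*p) := by
  have h2 := key2 (α := α) (σ := σ) hpq key
  linear_combination σ * h2 - (α*q/2) * hσ2



lemma isDeltaEigen_construct {α a β σ : ℝ} (hα : α < 0) (ha : 0 < a) (hβ : 0 < β)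
    (hσ : σ = 1 ∨ σ = -1)
    (hid : 2*β + α*(1 + σ*(Real.exp (-(β*a)) * Real.exp (-(β*a)))) = 0) :
    IsDeltaEigen α a (-(β^2)) := by
  have hσ2 : σ^2 = 1 := by rcases hσ with h | h <;> rw [h] <;> ring
  have hσabs : |σ| = 1 := by rcases hσ with h | h <;> rw [h] <;> simp
  set p := Real.exp (β*a) with hp
  set q := Real.exp (-(β*a)) with hq
  have hpq : p * q = 1 := by rw [hp, hq, ← Real.exp_add]; simp
  have hppos : 0 < p := Real.exp_pos _
  have hqpos : 0 < q := Real.exp_pos _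
  have hk2 : β*p = -(α/2)*(p+σ*q) := key2 hpq hid
  have hk3 : β*σ*p = -(α/2)*(q+σ*p) := key3 hpq hσ2 hid
  set ψ : ℝ → ℝ := fun x =>
    (Real.exp (β * max (-a) (min x a)) + σ * Real.exp (-(β * max (-a) (min x a)))) / 2
      * Real.exp (β * (a - max |x| a)) with hψ
  have hcont : Continuous ψ := by
    rw [hψ]; fun_prop
  -- region formulas
  have hmid : ∀ x : ℝ, -a ≤ x → x ≤ a →
      ψ x = (1/2) * Real.exp (β*x) + (σ/2) * Real.exp (-(β*x)) := by
    intro x h1 h2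
    simp only [hψ]
    rw [min_eq_left h2, max_eq_right h1, max_eq_right (abs_le.2 ⟨h1, h2⟩)]
    rw [sub_self, mul_zero, Real.exp_zero]
    ring
  have hright : ∀ x : ℝ, a ≤ x →
      ψ x = 0 * Real.exp (β*x) + ((p + σ*q)/2 * p) * Real.exp (-(β*x)) := by
    intro x h1
    simp only [hψ]
    rw [min_eq_right h1, max_eq_right (by linarith : -a ≤ a),
      abs_of_nonneg (by linarith : (0:ℝ) ≤ x), max_eq_left h1]
    rw [show β * (a - x) = β*a + -(β*x) by ring, Real.exp_add]
    rw [hp, hq]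
    ring
  have hleft : ∀ x : ℝ, x ≤ -a →
      ψ x = ((q + σ*p)/2 * p) * Real.exp (β*x) + 0 * Real.exp (-(β*x)) := by
    intro x h1
    simp only [hψ]
    rw [min_eq_left (by linarith : x ≤ a), max_eq_left h1,
      abs_of_nonpos (by linarith : x ≤ 0), max_eq_left (by linarith : a ≤ -x)]
    rw [show β * -a = -(β*a) by ring, neg_neg]
    rw [show β * (a - -x) = β*a + β*x by ring, Real.exp_add]
    rw [hp, hq]
    ring
  -- values at the interaction points
  have hψa : ψ a = (1/2) * p + (σ/2) * q := by
    rw [hmid a (by linarith) le_rfl]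
  have hψma : ψ (-a) = (1/2) * q + (σ/2) * p := by
    rw [hmid (-a) le_rfl (by linarith)]
    rw [show β * -a = -(β*a) by ring, neg_neg, hp, hq]
  have hψapos : 0 < ψ a := by
    rw [hψa]
    have hqp : q < p := by
      rw [hp, hq]
      apply Real.exp_lt_exp.2
      nlinarith
    rcases hσ with h | h <;> rw [h] <;> nlinarith
  have hne : ψ ≠ 0 := by
    intro h
    have := congrFun h a
    simp only [Pi.zero_apply] at this
    linarith [hψapos]
  -- L² bound
  have habs : ∀ x : ℝ, |ψ x| ≤ Real.exp (2*(β*a)) * Real.exp (-(β * |x|)) := by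
    intro x
    simp only [hψ]
    set t := β * max (-a) (min x a) with ht
    have htle : t ≤ β*a := by
      apply mul_le_mul_of_nonneg_left _ hβ.le
      exact max_le (by linarith) (min_le_right _ _)
    have htge : -(β*a) ≤ t := by
      have h0 : -a ≤ max (-a) (min x a) := le_max_left _ _
      rw [ht]
      nlinarith
    have e1 : |Real.exp t| ≤ p := by
      rw [Real.abs_exp, hp]; exact Real.exp_le_exp.2 htle
    have e2 : |σ * Real.exp (-t)| ≤ p := by
      rw [abs_mul, hσabs, one_mul, Real.abs_exp, hp]
      exact Real.exp_le_exp.2 (by linarith)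
    have h1 : |(Real.exp t + σ * Real.exp (-t)) / 2| ≤ p := by
      rw [abs_div, abs_two]
      have h5 := abs_add_le (Real.exp t) (σ * Real.exp (-t))
      linarith
    have h2 : Real.exp (β * (a - max |x| a)) ≤ p * Real.exp (-(β * |x|)) := by
      rw [hp, ← Real.exp_add]
      apply Real.exp_le_exp.2
      have h0 : |x| ≤ max |x| a := le_max_left _ _
      nlinarith
    have hrw : Real.exp (2*(β*a)) = p * p := by
      rw [hp, ← Real.exp_add]; ring_nf
    rw [abs_mul, Real.abs_exp, hrw]
    calc |(Real.exp t + σ * Real.exp (-t)) / 2| * Real.exp (β * (a - max |x| a))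
        ≤ p * (p * Real.exp (-(β * |x|))) := by
          apply mul_le_mul h1 h2 (Real.exp_pos _).le hppos.le
      _ = p * p * Real.exp (-(β * |x|)) := by ring
  have hmem : MemLp ψ 2 volume := by
    rw [memLp_two_iff_integrable_sq hcont.aestronglyMeasurable]
    have hg : Integrable (fun x : ℝ =>
        Real.exp (2*(β*a))^2 * Real.exp (-((β+β) * |x|))) volume :=
      (integrable_exp_abs (by linarith : (0:ℝ) < β+β)).const_mul _
    apply hg.mono' (hcont.pow 2).aestronglyMeasurable
    apply Filter.Eventually.of_forall
    intro x
    rw [Pi.pow_apply, Real.norm_eq_abs, abs_of_nonneg (sq_nonneg _), ← sq_abs]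
    have h := habs x
    have hrw : Real.exp (2*(β*a))^2 * Real.exp (-((β+β)*|x|))
        = (Real.exp (2*(β*a)) * Real.exp (-(β*|x|)))^2 := by
      rw [mul_pow]
      congr 1
      rw [sq, ← Real.exp_add]
      congr 1
      ring
    rw [hrw]
    exact pow_le_pow_left₀ (abs_nonneg _) h 2
  -- ODE away from ±a
  have hodes : ∀ x : ℝ, x ≠ a → x ≠ -a →
      DifferentiableAt ℝ ψ x ∧ DifferentiableAt ℝ (deriv ψ) x ∧
      -deriv (deriv ψ) x = (-(β^2)) * ψ x := by
    intro x hxa hxma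
    have base : DifferentiableAt ℝ ψ x ∧ DifferentiableAt ℝ (deriv ψ) x ∧
        deriv (deriv ψ) x = β^2 * ψ x := by
      rcases lt_trichotomy x (-a) with h | h | h
      · exact (eigen_piece isOpen_Iio (fun y hy => hleft y (le_of_lt hy))).2 x h
      · exact absurd h hxma
      · rcases lt_trichotomy x a with h2 | h2 | h2
        · exact (eigen_piece isOpen_Ioo
            (fun y hy => hmid y hy.1.le hy.2.le)).2 x ⟨h, h2⟩
        · exact absurd h2 hxa
        · exact (eigen_piece isOpen_Ioi (fun y hy => hright y (le_of_lt hy))).2 x h2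
    exact ⟨base.1, base.2.1, by rw [base.2.2]; ring⟩
  obtain ⟨hd1R, _⟩ := eigen_piece (β := β) isOpen_Ioi
    (fun y (hy : y ∈ Ioi a) => hright y (le_of_lt hy))
  obtain ⟨hd1M, _⟩ := eigen_piece (β := β) isOpen_Ioo
    (fun y (hy : y ∈ Ioo (-a) a) => hmid y hy.1.le hy.2.le)
  obtain ⟨hd1L, _⟩ := eigen_piece (β := β) isOpen_Iio
    (fun y (hy : y ∈ Iio (-a)) => hleft y (le_of_lt hy))
  have em1 : Real.exp (β * (-a)) = q := by rw [hq]; congr 1; ring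
  have em2 : Real.exp (-(β * (-a))) = p := by rw [hp]; congr 1; ring
  refine ⟨ψ, hne, hcont, hmem, hodes, ?_, ?_⟩
  · refine ⟨(β*0) * Real.exp (β*a) + (-(β*((p + σ*q)/2 * p))) * Real.exp (-(β*a)),
      (β*(1/2)) * Real.exp (β*a) + (-(β*(σ/2))) * Real.exp (-(β*a)), ?_, ?_, ?_⟩
    · exact tendsto_piece nhdsWithin_le_nhds
        (eventually_nhdsWithin_of_forall (fun y hy => hd1R y hy))
    · apply tendsto_piece nhdsWithin_le_nhds
      filter_upwards [Ioo_mem_nhdsLT_of_mem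
        (show a ∈ Ioc (-a) a from ⟨by linarith, le_rfl⟩)] with y hy
      exact hd1M y hy
    · rw [hψa, ← hp, ← hq]
      linear_combination (-1) * hk2 - (β*(p+σ*q)/2) * hpq
  · refine ⟨(β*(1/2)) * Real.exp (β*(-a)) + (-(β*(σ/2))) * Real.exp (-(β*(-a))),
      (β*((q + σ*p)/2 * p)) * Real.exp (β*(-a)) + (-(β*0)) * Real.exp (-(β*(-a))), ?_, ?_, ?_⟩
    · apply tendsto_piece nhdsWithin_le_nhds
      filter_upwards [Ioo_mem_nhdsGT_of_mem
        (show -a ∈ Ico (-a) a from ⟨le_rfl, by linarith⟩)] with y hy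
      exact hd1M y hy
    · exact tendsto_piece nhdsWithin_le_nhds
        (eventually_nhdsWithin_of_forall (fun y hy => hd1L y hy))
    · rw [em1, em2, hψma]
      linear_combination (-1) * hk3 - (β*(q+σ*p)/2) * hpq
set_option maxHeartbeats 2000000 in
/-- for `α < 0`, the double-delta operator has exactly the two
negative eigenvalues `E₁ < E₂ < 0`, given by the Lambert `W` formulas, if and
only if `a > −1/α`. Here `W` is the principal Lambert branch, characterized by
`W(x) e^{W(x)} = x` and `W(x) ≥ −1` on `[−e⁻¹, ∞)`. -/
theorem stmt_16 (α a : ℝ) (hα : α < 0) (ha : 0 < a)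
    (W : ℝ → ℝ)
    (hW : ∀ x : ℝ, -Real.exp (-1) ≤ x →
      W x * Real.exp (W x) = x ∧ -1 ≤ W x)
    (E₁ E₂ : ℝ)
    (hE₁ : E₁ = -(1 / (4 * a ^ 2)) * (W (-(a * α) * Real.exp (a * α)) - a * α) ^ 2)
    (hE₂ : E₂ = -(1 / (4 * a ^ 2)) * (W ((a * α) * Real.exp (a * α)) - a * α) ^ 2) :
    (({E : ℝ | E < 0 ∧ IsDeltaEigen α a E} = {E₁, E₂} ∧ E₁ < E₂ ∧ E₂ < 0)
      ↔ -1 / α < a) := by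
  have hαne : α ≠ 0 := ne_of_lt hα
  have hane : a ≠ 0 := ne_of_gt ha
  constructor
  · -- forward: the spectral picture forces a > -1/α
    rintro ⟨-, -, hneg⟩
    by_contra hcon
    have hcon' : a ≤ -1 / α := not_lt.1 hcon
    have ht1 : -1 ≤ a * α := by
      have h2 : (-1 / α) * α ≤ a * α := mul_le_mul_of_nonpos_right hcon' hα.le
      have h3 : (-1 / α) * α = -1 := by field_simp
      linarith
    obtain ⟨hWY, hWYge⟩ := hW ((a * α) * Real.exp (a * α)) (lam_ge (a * α))
    have heqW : W ((a * α) * Real.exp (a * α)) = a * α :=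
      lamMono.injOn (Set.mem_Ici.2 hWYge) (Set.mem_Ici.2 ht1) (by simpa using hWY)
    rw [heqW, sub_self] at hE₂
    simp at hE₂
    linarith
  · -- backward: construct the spectrum
    intro hlt
    have htlt : a * α < -1 := by
      have h2 : α * a < α * (-1 / α) := mul_lt_mul_of_neg_left hlt hα
      have h3 : α * (-1 / α) = -1 := by field_simp
      nlinarith
    have hXpos : 0 < -(a * α) * Real.exp (a * α) :=
      mul_pos (by linarith) (Real.exp_pos _)
    obtain ⟨hw1, hw1ge⟩ := hW (-(a * α) * Real.exp (a * α))
      (le_trans (by linarith [Real.exp_pos (-1)]) hXpos.le)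
    obtain ⟨hw2, hw2ge⟩ := hW ((a * α) * Real.exp (a * α)) (lam_ge (a * α))
    obtain ⟨w₁, hw₁def⟩ : ∃ w, w = W (-(a * α) * Real.exp (a * α)) := ⟨_, rfl⟩
    obtain ⟨w₂, hw₂def⟩ : ∃ w, w = W ((a * α) * Real.exp (a * α)) := ⟨_, rfl⟩
    rw [← hw₁def] at hE₁ hw1 hw1ge
    rw [← hw₂def] at hE₂ hw2 hw2ge
    have hw1pos : 0 < w₁ := by
      by_contra hc
      push_neg at hc
      nlinarith [Real.exp_pos w₁]
    have hw2neg : w₂ < 0 := by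
      by_contra hc
      push_neg at hc
      nlinarith [Real.exp_pos w₂, Real.exp_pos (a * α)]
    obtain ⟨β₁, hβ₁def⟩ : ∃ b, b = (w₁ - a * α) / (2 * a) := ⟨_, rfl⟩
    obtain ⟨β₂, hβ₂def⟩ : ∃ b, b = (w₂ - a * α) / (2 * a) := ⟨_, rfl⟩
    have hβ₁pos : 0 < β₁ := hβ₁def ▸ div_pos (by linarith) (by linarith)
    have hβ₂pos : 0 < β₂ := hβ₂def ▸ div_pos (by linarith) (by linarith)
    have hβ21 : β₂ < β₁ := by
      rw [hβ₁def, hβ₂def]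
      apply div_lt_div_of_pos_right (by linarith) (by linarith)
    have hhalf : a/(2*a) = 1/2 := by
      rw [div_eq_div_iff (by positivity : (2:ℝ)*a ≠ 0) (by norm_num : (2:ℝ) ≠ 0)]
      ring
    have hE1eq : E₁ = -(β₁ ^ 2) := by
      have h9 : β₁^2 = (w₁ - a*α)^2 / (4*a^2) := by
        rw [hβ₁def, div_pow]
        congr 1
        ring
      rw [hE₁, h9]
      ring
    have hE2eq : E₂ = -(β₂ ^ 2) := by
      have h9 : β₂^2 = (w₂ - a*α)^2 / (4*a^2) := by
        rw [hβ₂def, div_pow]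
        congr 1
        ring
      rw [hE₂, h9]
      ring
    have hba1 : 2*(β₁*a) = w₁ - a*α := by
      rw [hβ₁def, div_mul_eq_mul_div, mul_div_assoc, hhalf]
      ring
    have hba2 : 2*(β₂*a) = w₂ - a*α := by
      rw [hβ₂def, div_mul_eq_mul_div, mul_div_assoc, hhalf]
      ring
    -- the transcendental identities
    have hq1 : Real.exp (-(β₁*a)) * Real.exp (-(β₁*a)) = Real.exp (a*α) * (Real.exp w₁)⁻¹ := by
      rw [← Real.exp_add]
      rw [show -(β₁*a) + -(β₁*a) = a*α - w₁ by linarith [hba1]]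
      rw [Real.exp_sub, div_eq_mul_inv]
    have hq2 : Real.exp (-(β₂*a)) * Real.exp (-(β₂*a)) = Real.exp (a*α) * (Real.exp w₂)⁻¹ := by
      rw [← Real.exp_add]
      rw [show -(β₂*a) + -(β₂*a) = a*α - w₂ by linarith [hba2]]
      rw [Real.exp_sub, div_eq_mul_inv]
    have haa : a * a⁻¹ = 1 := mul_inv_cancel₀ hane
    have hee1 : Real.exp w₁ * (Real.exp w₁)⁻¹ = 1 := mul_inv_cancel₀ (Real.exp_pos _).ne'
    have hee2 : Real.exp w₂ * (Real.exp w₂)⁻¹ = 1 := mul_inv_cancel₀ (Real.exp_pos _).ne'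
    have hkey1 : 2*β₁ + α*(1 + 1*(Real.exp (-(β₁*a)) * Real.exp (-(β₁*a)))) = 0 := by
      rw [hq1]
      linear_combination a⁻¹ * hba1 + (a⁻¹ * (Real.exp w₁)⁻¹) * hw1
        - (2*β₁ + α + α*Real.exp (a*α)*(Real.exp w₁)⁻¹) * haa - (w₁ * a⁻¹) * hee1
    have hkey2 : 2*β₂ + α*(1 + (-1)*(Real.exp (-(β₂*a)) * Real.exp (-(β₂*a)))) = 0 := by
      rw [hq2]
      linear_combination a⁻¹ * hba2 + (a⁻¹ * (Real.exp w₂)⁻¹) * hw2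
        - (2*β₂ + α - α*Real.exp (a*α)*(Real.exp w₂)⁻¹) * haa - (w₂ * a⁻¹) * hee2
    have heig1 : IsDeltaEigen α a E₁ := by
      rw [hE1eq]
      exact isDeltaEigen_construct hα ha hβ₁pos (Or.inl rfl) hkey1
    have heig2 : IsDeltaEigen α a E₂ := by
      rw [hE2eq]
      exact isDeltaEigen_construct hα ha hβ₂pos (Or.inr rfl) hkey2
    have hsq21 : β₂^2 < β₁^2 := by
      have := pow_lt_pow_left₀ hβ21 hβ₂pos.le (two_ne_zero)
      simpa using this
    have hE1neg : E₁ < 0 := by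
      rw [hE1eq]
      have := pow_pos hβ₁pos 2
      linarith
    have hE2neg : E₂ < 0 := by
      rw [hE2eq]
      have := pow_pos hβ₂pos 2
      linarith
    have hE12 : E₁ < E₂ := by
      rw [hE1eq, hE2eq]
      linarith
    refine ⟨Set.ext fun E => ⟨?_, ?_⟩, hE12, hE2neg⟩
    · -- uniqueness: any negative eigenvalue is E₁ or E₂
      rintro ⟨hEneg, ψ, hne, hcont, hmem, hode,
        ⟨dpa, dma, hdpa, hdma, hjma⟩, ⟨dpm, dmm, hdpm, hdmm, hjmm⟩⟩
      obtain ⟨βE, hβEdef⟩ : ∃ b, b = Real.sqrt (-E) := ⟨_, rfl⟩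
      have hβE : 0 < βE := hβEdef ▸ Real.sqrt_pos.2 (by linarith)
      have hsq : βE ^ 2 = -E := hβEdef ▸ Real.sq_sqrt (by linarith)
      have hEval : E = -(βE ^ 2) := by linarith
      have hOde : ∀ x : ℝ, x ≠ a → x ≠ -a →
          DifferentiableAt ℝ ψ x ∧ DifferentiableAt ℝ (deriv ψ) x ∧
          deriv (deriv ψ) x = βE ^ 2 * ψ x := by
        intro x h1 h2
        obtain ⟨hd1, hd2, hd3⟩ := hode x h1 h2
        exact ⟨hd1, hd2, by rw [hEval] at hd3; linear_combination (-1 : ℝ) * hd3⟩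
      obtain ⟨A₁, B₁, hfR⟩ := ode_form hβE isOpen_Ioi (convex_Ioi a)
        (fun x hx => hOde x (ne_of_gt hx)
          (by have h1 : a < x := hx; intro h2; rw [h2] at h1; linarith))
      obtain ⟨A₂, B₂, hfL⟩ := ode_form hβE isOpen_Iio (convex_Iio (-a))
        (fun x hx => hOde x
          (by have h1 : x < -a := hx; intro h2; rw [h2] at h1; linarith)
          (ne_of_lt hx))
      obtain ⟨D₁, D₂, hfM⟩ := ode_form hβE isOpen_Ioo (convex_Ioo (-a) a)
        (fun x hx => hOde x (ne_of_lt hx.2) (ne_of_gt hx.1))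
      have hA₁ : A₁ = 0 := coeff_right hβE hmem hcont.aestronglyMeasurable hfR
      have hB₂ : B₂ = 0 := coeff_left hβE hmem hcont.aestronglyMeasurable hfL
      obtain ⟨hdR, -⟩ := eigen_piece isOpen_Ioi hfR
      obtain ⟨hdM, -⟩ := eigen_piece isOpen_Ioo hfM
      obtain ⟨hdL, -⟩ := eigen_piece isOpen_Iio hfL
      obtain ⟨P, hPdef⟩ : ∃ p, p = Real.exp (βE * a) := ⟨_, rfl⟩
      obtain ⟨Q, hQdef⟩ : ∃ q, q = Real.exp (-(βE * a)) := ⟨_, rfl⟩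
      have hPQ : P * Q = 1 := by rw [hPdef, hQdef, ← Real.exp_add]; simp
      have hPpos : 0 < P := hPdef ▸ Real.exp_pos _
      have hQpos : 0 < Q := hQdef ▸ Real.exp_pos _
      have em1 : Real.exp (βE * (-a)) = Q := by rw [hQdef]; congr 1; ring
      have em2 : Real.exp (-(βE * (-a))) = P := by rw [hPdef]; congr 1; ring
      -- boundary values
      have hIooIio : Ioo (-a) a ∈ nhdsWithin a (Iio a) :=
        Ioo_mem_nhdsLT_of_mem ⟨by linarith, le_rfl⟩
      have hIooIoi : Ioo (-a) a ∈ nhdsWithin (-a) (Ioi (-a)) :=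
        Ioo_mem_nhdsGT_of_mem ⟨le_rfl, by linarith⟩
      have hvala : ψ a = A₁ * P + B₁ * Q := by
        rw [hPdef, hQdef]
        exact tendsto_nhds_unique
          ((hcont.tendsto a).mono_left nhdsWithin_le_nhds)
          (tendsto_piece (l := nhdsWithin a (Set.Ioi a)) nhdsWithin_le_nhds
            (eventually_nhdsWithin_of_forall hfR))
      have hvala' : ψ a = D₁ * P + D₂ * Q := by
        rw [hPdef, hQdef]
        refine tendsto_nhds_unique
          ((hcont.tendsto a).mono_left nhdsWithin_le_nhds)
          (tendsto_piece (l := nhdsWithin a (Set.Iio a)) nhdsWithin_le_nhds ?_)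
        filter_upwards [hIooIio] with y hy
        exact hfM y hy
      have hvalm : ψ (-a) = A₂ * Q + B₂ * P := by
        have := tendsto_nhds_unique
          ((hcont.tendsto (-a)).mono_left nhdsWithin_le_nhds)
          (tendsto_piece (l := nhdsWithin (-a) (Iio (-a))) nhdsWithin_le_nhds
            (eventually_nhdsWithin_of_forall hfL))
        rwa [em1, em2] at this
      have hvalm' : ψ (-a) = D₁ * Q + D₂ * P := by
        have := tendsto_nhds_unique
          ((hcont.tendsto (-a)).mono_left nhdsWithin_le_nhds)
          (tendsto_piece (l := nhdsWithin (-a) (Ioi (-a))) nhdsWithin_le_nhds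
            (by filter_upwards [hIooIoi] with y hy; exact hfM y hy))
        rwa [em1, em2] at this
      -- derivative limits
      have hdpa' : dpa = (βE*A₁) * P + (-(βE*B₁)) * Q := by
        rw [hPdef, hQdef]
        exact tendsto_nhds_unique hdpa
          (tendsto_piece (l := nhdsWithin a (Set.Ioi a)) nhdsWithin_le_nhds
            (eventually_nhdsWithin_of_forall hdR))
      have hdma' : dma = (βE*D₁) * P + (-(βE*D₂)) * Q := by
        rw [hPdef, hQdef]
        exact tendsto_nhds_unique hdma
          (tendsto_piece (l := nhdsWithin a (Set.Iio a)) nhdsWithin_le_nhds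
            (by filter_upwards [hIooIio] with y hy; exact hdM y hy))
      have hdpm' : dpm = (βE*D₁) * Q + (-(βE*D₂)) * P := by
        have := tendsto_nhds_unique hdpm
          (tendsto_piece (l := nhdsWithin (-a) (Ioi (-a))) nhdsWithin_le_nhds
            (by filter_upwards [hIooIoi] with y hy; exact hdM y hy))
        rwa [em1, em2] at this
      have hdmm' : dmm = (βE*A₂) * Q + (-(βE*B₂)) * P := by
        have := tendsto_nhds_unique hdmm
          (tendsto_piece (l := nhdsWithin (-a) (Iio (-a))) nhdsWithin_le_nhds
            (eventually_nhdsWithin_of_forall hdL))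
        rwa [em1, em2] at this
      -- the two matching equations
      have hBQ : B₁ * Q = D₁ * P + D₂ * Q := by linear_combination (-1) * hvala + hvala' - P * hA₁
      have hAQ : A₂ * Q = D₁ * Q + D₂ * P := by linear_combination (-1) * hvalm + hvalm' - P * hB₂
      rw [hdpa', hdma', hA₁, hvala'] at hjma
      rw [hdpm', hdmm', hB₂, hvalm'] at hjmm
      have eq1 : -(2*βE*D₁*P) = α*(D₁*P + D₂*Q) := by
        linear_combination hjma + βE * hBQ
      have eq2 : -(2*βE*D₂*P) = α*(D₁*Q + D₂*P) := by
        linear_combination hjmm + βE * hAQ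
      -- nondegeneracy
      have hD : ¬(D₁ = 0 ∧ D₂ = 0) := by
        rintro ⟨h1, h2⟩
        apply hne
        have hψa0 : ψ a = 0 := by rw [hvala', h1, h2]; ring
        have hψma0 : ψ (-a) = 0 := by rw [hvalm', h1, h2]; ring
        have hB₁0 : B₁ = 0 := by
          have h3 := hvala
          rw [hψa0, hA₁] at h3
          have h4 : B₁ * Q = 0 := by linear_combination -h3
          rcases mul_eq_zero.1 h4 with h5 | h5
          · exact h5
          · exact absurd h5 hQpos.ne'
        have hA₂0 : A₂ = 0 := by
          have h3 := hvalm
          rw [hψma0, hB₂] at h3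
          have h4 : A₂ * Q = 0 := by linear_combination -h3
          rcases mul_eq_zero.1 h4 with h5 | h5
          · exact h5
          · exact absurd h5 hQpos.ne'
        funext x
        simp only [Pi.zero_apply]
        rcases lt_trichotomy x (-a) with h | h | h
        · rw [hfL x h, hA₂0, hB₂]; ring
        · rw [h]; exact hψma0
        · rcases lt_trichotomy x a with hx2 | hx2 | hx2
          · rw [hfM x ⟨h, hx2⟩, h1, h2]; ring
          · rw [hx2]; exact hψa0
          · rw [hfR x hx2, hA₁, hB₁0]; ring
      have hD₁ : D₁ ≠ 0 := by
        intro h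
        apply hD
        refine ⟨h, ?_⟩
        rw [h] at eq1
        have h4 : α * (D₂ * Q) = 0 := by linear_combination -eq1
        rcases mul_eq_zero.1 h4 with h5 | h5
        · exact absurd h5 hαne
        · rcases mul_eq_zero.1 h5 with h6 | h6
          · exact h6
          · exact absurd h6 hQpos.ne'
      have hD₂ : D₂ ≠ 0 := by
        intro h
        apply hD
        refine ⟨?_, h⟩
        rw [h] at eq2
        have h4 : α * (D₁ * Q) = 0 := by linear_combination -eq2
        rcases mul_eq_zero.1 h4 with h5 | h5
        · exact absurd h5 hαne
        · rcases mul_eq_zero.1 h5 with h6 | h6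
          · exact h6
          · exact absurd h6 hQpos.ne'
      -- determinant factorisation
      have e1' : (2*βE + α)*(D₁*P) = -(α*(D₂*Q)) := by linear_combination -eq1
      have e2' : (2*βE + α)*(D₂*P) = -(α*(D₁*Q)) := by linear_combination -eq2
      have hm : ((2*βE+α)*(D₁*P)) * ((2*βE+α)*(D₂*P)) = (-(α*(D₂*Q))) * (-(α*(D₁*Q))) := by
        rw [e1', e2']
      have hcancel : (2*βE+α)*(2*βE+α)*(P*P) = α*α*(Q*Q) := by
        have hD12 : D₁ * D₂ ≠ 0 := mul_ne_zero hD₁ hD₂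
        apply mul_left_cancel₀ hD12
        linear_combination hm
      have hdet : (2*βE + α + α*(Q*Q)) * (2*βE + α - α*(Q*Q)) = 0 := by
        linear_combination (Q*Q) * hcancel - ((2*βE+α)^2*(P*Q+1)) * hPQ
      -- translate each factor into a Lambert identity
      have hQQ : Q * Q = Real.exp (a*α - (2*βE*a + a*α)) := by
        rw [hQdef, ← Real.exp_add]
        congr 1
        ring
      have h3 : Q*Q*Real.exp (2*βE*a + a*α) = Real.exp (a*α) := by
        rw [hQQ, ← Real.exp_add]
        congr 1
        ring
      rcases mul_eq_zero.1 hdet with hcase | hcase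
      · -- even case : E = E₁
        have h2 : (2*βE*a + a*α) = -(a*α)*(Q*Q) := by linear_combination a * hcase
        have hwexp : (2*βE*a + a*α) * Real.exp (2*βE*a + a*α)
            = -(a * α) * Real.exp (a * α) := by
          linear_combination (Real.exp (2*βE*a + a*α)) * h2 - (a*α) * h3
        have hwpos : 0 < 2*βE*a + a*α := by
          by_contra hc
          push_neg at hc
          linarith [mul_nonpos_of_nonpos_of_nonneg hc (Real.exp_pos (2*βE*a + a*α)).le,
            hXpos, hwexp]
        have hwW : 2*βE*a + a*α = w₁ :=
          lamMono.injOn (Set.mem_Ici.2 (by linarith)) (Set.mem_Ici.2 hw1ge)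
            (by show (2*βE*a + a*α) * Real.exp (2*βE*a + a*α) = w₁ * Real.exp w₁
                rw [hwexp, hw1])
        have hβval : βE = β₁ := by
          rw [hβ₁def, eq_div_iff (by linarith : (2:ℝ)*a ≠ 0)]
          linarith [hwW]
        exact Set.mem_insert_iff.2 (Or.inl (by rw [hEval, hβval, hE1eq]))
      · -- odd case : E = E₂
        have h2 : (2*βE*a + a*α) = (a*α)*(Q*Q) := by linear_combination a * hcase
        have hwexp : (2*βE*a + a*α) * Real.exp (2*βE*a + a*α)
            = (a * α) * Real.exp (a * α) := by
          linear_combination (Real.exp (2*βE*a + a*α)) * h2 + (a*α) * h3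
        have hwgt : a*α < 2*βE*a + a*α := by
          have h0 : 0 < βE * a := mul_pos hβE ha
          linarith
        have hwge : -1 ≤ 2*βE*a + a*α := by
          by_contra hc
          push_neg at hc
          have := lamAnti (Set.mem_Iic.2 htlt.le) (Set.mem_Iic.2 hc.le) hwgt
          have this2 : (2*βE*a + a*α) * Real.exp (2*βE*a + a*α)
              < (a*α) * Real.exp (a*α) := this
          linarith [hwexp, this2]
        have hwW : 2*βE*a + a*α = w₂ :=
          lamMono.injOn (Set.mem_Ici.2 hwge) (Set.mem_Ici.2 hw2ge)
            (by show (2*βE*a + a*α) * Real.exp (2*βE*a + a*α) = w₂ * Real.exp w₂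
                rw [hwexp, hw2])
        have hβval : βE = β₂ := by
          rw [hβ₂def, eq_div_iff (by linarith : (2:ℝ)*a ≠ 0)]
          linarith [hwW]
        exact Set.mem_insert_iff.2 (Or.inr (Set.mem_singleton_iff.2
          (by rw [hEval, hβval, hE2eq])))
    · -- the two constructed eigenvalues
      intro hE
      rcases hE with rfl | hE
      · exact ⟨hE1neg, heig1⟩
      · rw [Set.mem_singleton_iff.1 hE]
        exact ⟨hE2neg, heig2⟩
end
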